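/- arXiv:2312.01750 — 6 statements merged into one kernel-verified Lean document; each statement's English description precedes it below -/
import Mathlib

section
/- Let A ⊆ B be commutative domains and let δ be an exponential map on B over A. Then the ring of δ-invariants B^δ is factorially closed in B: for all nonzero x, y ∈ B, if xy ∈ B^δ then x ∈ B^δ and y ∈ B^δ. In particular, B^δ is algebraically closed in B. -/
open Polynomial

/-- An *exponential map* on a commutative ring `B` over `A`: an `A`-algebra homomorphism
`δ : B → B[t]` such that evaluation at `t = 0` is the identity and
`δ_s ∘ δ_t = δ_{s+t}` (the co-associativity / iterativity condition). -/
structure ExpMap (A : Type*) (B : Type*) [CommRing A] [CommRing B] [Algebra A B] where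
  toFun : B →ₐ[A] Polynomial B
  eval_zero : ∀ b : B, (toFun b).eval 0 = b
  coassoc : ∀ b : B,
    (toFun b).map (toFun.toRingHom) =
      (toFun b).eval₂ (Polynomial.C.comp Polynomial.C)
        (Polynomial.C Polynomial.X + Polynomial.X)

namespace ExpMap

variable {A B : Type*} [CommRing A] [CommRing B] [Algebra A B]

/-- The ring of invariants `B^δ = {x ∈ B | δ(x) = x}`. -/
def invariants (δ : ExpMap A B) : Subalgebra A B where
  carrier := {x : B | δ.toFun x = Polynomial.C x}
  mul_mem' := by
    intro a b ha hb
    simp only [Set.mem_setOf_eq] at *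
    rw [map_mul, ha, hb, ← map_mul]
  add_mem' := by
    intro a b ha hb
    simp only [Set.mem_setOf_eq] at *
    rw [map_add, ha, hb, ← map_add]
  algebraMap_mem' := by
    intro r
    simp only [Set.mem_setOf_eq, AlgHom.commutes, Polynomial.algebraMap_apply]

/-- `δ` is non-trivial if `B^δ ≠ B`. -/
def IsNontrivial (δ : ExpMap A B) : Prop := δ.invariants ≠ ⊤

/-- The iterative higher derivations attached to `δ`: `δ(x) = Σ (D i x) tⁱ`. -/
noncomputable def D (δ : ExpMap A B) (i : ℕ) (x : B) : B := (δ.toFun x).coeff i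

/-- A *local slice* of `δ`: an element whose image under `δ` has minimal positive
`t`-degree. -/
def IsLocalSlice (δ : ExpMap A B) (x : B) : Prop :=
  0 < (δ.toFun x).natDegree ∧
    ∀ y : B, 0 < (δ.toFun y).natDegree → (δ.toFun x).natDegree ≤ (δ.toFun y).natDegree

/-- A *slice* of `δ`: a local slice `x` such that `D n x` is a unit, where
`n = deg_t δ(x)`. -/
def IsSlice (δ : ExpMap A B) (x : B) : Prop :=
  δ.IsLocalSlice x ∧ IsUnit ((δ.toFun x).coeff (δ.toFun x).natDegree)

end ExpMap

/-- `X : Fin n → B` is a *coordinate system* of `B` over `A`, i.e. `B = A[X₁, …, Xₙ]`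
is a polynomial ring in the `n` variables `X₁, …, Xₙ` over `A`. -/
def IsCoordSystem (A : Type*) {B : Type*} [CommRing A] [CommRing B] [Algebra A B]
    {n : ℕ} (X : Fin n → B) : Prop :=
  Function.Bijective (MvPolynomial.aeval (R := A) X)

namespace ExpMap

variable {A B : Type*} [CommRing A] [CommRing B] [Algebra A B]

/-- The *rank* of an exponential map `δ` on `B = A^[n]`: the least `r` such that some
coordinate system `{X₁, …, Xₙ}` satisfies `A[X₁, …, X_{n-r}] ⊆ B^δ`. -/
noncomputable def rank (δ : ExpMap A B) (n : ℕ) : ℕ :=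
  sInf {r : ℕ | ∃ X : Fin n → B, IsCoordSystem A X ∧
    Algebra.adjoin A (X '' {i : Fin n | (i : ℕ) < n - r}) ≤ δ.invariants}

/-- `X ∈ Γ_δ(B)`: a coordinate system with `A[X₁, …, X_{n-r}] ⊆ B^δ` where `r = rank δ`. -/
def InGamma (δ : ExpMap A B) {n : ℕ} (X : Fin n → B) : Prop :=
  IsCoordSystem A X ∧
    Algebra.adjoin A (X '' {i : Fin n | (i : ℕ) < n - δ.rank n}) ≤ δ.invariants

/-- `δ` is *rigid* if the subring `A[X₁, …, X_{n-r}]` does not depend on the choice of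
`{X₁, …, Xₙ} ∈ Γ_δ(B)`. -/
def IsRigid (δ : ExpMap A B) (n : ℕ) : Prop :=
  ∀ X X' : Fin n → B, δ.InGamma X → δ.InGamma X' →
    Algebra.adjoin A (X '' {i : Fin n | (i : ℕ) < n - δ.rank n}) =
      Algebra.adjoin A (X' '' {i : Fin n | (i : ℕ) < n - δ.rank n})

/-- `δ` is *triangular with respect to the coordinate system `X`* over `A`. -/
def IsTriangularWith (δ : ExpMap A B) {n : ℕ} (X : Fin n → B) : Prop :=
  IsCoordSystem A X ∧
    (∀ i : Fin n, ∀ j : ℕ, 0 < j →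
      (δ.toFun (X i)).coeff j ∈ Algebra.adjoin A (X '' {l : Fin n | (l : ℕ) < (i : ℕ)})) ∧
    (∀ i : Fin n, δ.toFun (X i) ≠ Polynomial.C (X i) →
      (∀ l : Fin n, (l : ℕ) < (i : ℕ) → δ.toFun (X l) = Polynomial.C (X l)) →
      δ.IsLocalSlice (X i))

/-- `δ` is *triangular* over `A` (in `n` variables). -/
def IsTriangular (δ : ExpMap A B) (n : ℕ) : Prop :=
  ∃ X : Fin n → B, δ.IsTriangularWith X

/-- `δ` is *triangular over the subring `R`* of `B` (with `B = R^[m]`). -/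
def IsTriangularOver (δ : ExpMap A B) (R : Subalgebra A B) (m : ℕ) : Prop :=
  ∃ X : Fin m → B,
    Function.Bijective (MvPolynomial.aeval (R := ↥R) X) ∧
    (∀ i : Fin m, ∀ j : ℕ, 0 < j →
      (δ.toFun (X i)).coeff j ∈ Algebra.adjoin (↥R) (X '' {l : Fin m | (l : ℕ) < (i : ℕ)})) ∧
    (∀ i : Fin m, δ.toFun (X i) ≠ Polynomial.C (X i) →
      (∀ l : Fin m, (l : ℕ) < (i : ℕ) → δ.toFun (X l) = Polynomial.C (X l)) →
      δ.IsLocalSlice (X i))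

end ExpMap


section Aux

variable {A B : Type*} [CommRing A] [IsDomain A] [CommRing B] [IsDomain B] [Algebra A B]

/-- If `δ(b)` has `natDegree` zero, then `b` is a `δ`-invariant. -/
lemma mem_invariants_of_natDegree_eq_zero (δ : ExpMap A B) {b : B}
    (h : (δ.toFun b).natDegree = 0) : b ∈ δ.invariants := by
  obtain ⟨a, ha⟩ := Polynomial.natDegree_eq_zero.mp h
  have hb : a = b := by
    have := δ.eval_zero b
    rw [← ha, Polynomial.eval_C] at this
    exact this
  show δ.toFun b = Polynomial.C b
  rw [← ha, hb]

end Aux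

/-- Let `A ⊆ B` be domains and `δ` an exponential map on `B` over `A`.
Then `B^δ` is factorially closed in `B`; in particular it is algebraically closed in `B`. -/
theorem invariants_factorially_closed
    {A B : Type*} [CommRing A] [IsDomain A] [CommRing B] [IsDomain B] [Algebra A B]
    (hAB : Function.Injective (algebraMap A B)) (δ : ExpMap A B) :
    (∀ x y : B, x ≠ 0 → y ≠ 0 → x * y ∈ δ.invariants →
      x ∈ δ.invariants ∧ y ∈ δ.invariants) ∧
    (∀ b : B, IsAlgebraic (↥δ.invariants) b → b ∈ δ.invariants) := by
  constructor
  · intro x y hx hy hxy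
    have hdx : δ.toFun x ≠ 0 := fun h => hx (by simpa [h] using (δ.eval_zero x).symm)
    have hdy : δ.toFun y ≠ 0 := fun h => hy (by simpa [h] using (δ.eval_zero y).symm)
    have hmul : δ.toFun x * δ.toFun y = Polynomial.C (x * y) := by
      rw [← map_mul]; exact hxy
    have hdeg : (δ.toFun x).natDegree + (δ.toFun y).natDegree = 0 := by
      rw [← Polynomial.natDegree_mul hdx hdy, hmul, Polynomial.natDegree_C]
    exact ⟨mem_invariants_of_natDegree_eq_zero δ (Nat.eq_zero_of_add_eq_zero_right hdeg),
      mem_invariants_of_natDegree_eq_zero δ (Nat.eq_zero_of_add_eq_zero_left hdeg)⟩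
  · intro b hb
    by_cases hb0 : b = 0
    · subst hb0; exact Subalgebra.zero_mem _
    apply mem_invariants_of_natDegree_eq_zero δ
    by_contra hdeg
    have hfne : δ.toFun b ≠ 0 := fun h => hb0 (by simpa [h] using (δ.eval_zero b).symm)
    -- δ(b) is algebraic over the invariants
    have halg : IsAlgebraic (↥δ.invariants) (δ.toFun b) := by
      obtain ⟨p, hp0, hpb⟩ := hb
      refine ⟨p, hp0, ?_⟩
      have key : Polynomial.aeval (δ.toFun b) p =
          δ.toFun (Polynomial.aeval b p) := by
        rw [Polynomial.aeval_def, Polynomial.aeval_def, Polynomial.eval₂_eq_sum_range,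
          Polynomial.eval₂_eq_sum_range, map_sum]
        refine Finset.sum_congr rfl fun i _ => ?_
        rw [map_mul, map_pow]
        congr 1
        have hinv : δ.toFun ((p.coeff i : B)) = Polynomial.C ((p.coeff i : B)) :=
          (p.coeff i).2
        calc algebraMap (↥δ.invariants) (Polynomial B) (p.coeff i)
            = Polynomial.C ((p.coeff i : B)) := rfl
          _ = δ.toFun ((algebraMap (↥δ.invariants) B) (p.coeff i)) := hinv.symm
      rw [key, hpb, map_zero]
    have hinj : Function.Injective (algebraMap (↥δ.invariants) B) := Subtype.val_injective
    have halgB : IsAlgebraic B (δ.toFun b) := halg.extendScalars hinj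
    exact (Polynomial.transcendental (δ.toFun b) hdeg
      (mem_nonZeroDivisors_of_ne_zero (Polynomial.leadingCoeff_ne_zero.mpr hfne))) halgB
end

section
/- (Slice Theorem) Let k be a field, B a domain containing k, and δ a non-trivial exponential map on B over k. If x ∈ B is a slice of δ, then B = B^δ[x] and x is transcendental over B^δ, i.e., B is a polynomial ring in one variable over B^δ. -/
open Polynomial

section SliceAux

open Polynomial

namespace SliceAux

lemma prime_pow_of_dvd_choose (p : ℕ) (hp : p.Prime) :
    ∀ n : ℕ, 0 < n → (∀ j, 0 < j → j < n → p ∣ n.choose j) → ∃ e, n = p ^ e := by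
  intro n
  induction n using Nat.strong_induction_on with
  | _ n ih =>
    intro hn h
    rcases eq_or_lt_of_le (show 1 ≤ n from hn) with h1 | h2
    · exact ⟨0, by simpa using h1.symm⟩
    · have hpn : p ∣ n := by simpa using h 1 one_pos h2
      have hp2 := hp.two_le
      have hq : 0 < n / p := Nat.div_pos (Nat.le_of_dvd hn hpn) hp.pos
      haveI : Fact p.Prime := ⟨hp⟩
      have key : ∀ j, 0 < j → j < n / p → p ∣ (n / p).choose j := by
        intro j hj hjn
        have hlt : p * j < n := by
          have := Nat.mul_lt_mul_of_lt_of_le hjn (le_refl p) hp.pos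
          calc p * j = j * p := Nat.mul_comm _ _
          _ < n / p * p := this
          _ = n := Nat.div_mul_cancel hpn
        have hdvd : p ∣ n.choose (p * j) := h (p * j) (by positivity) hlt
        have hmod := Choose.choose_modEq_choose_mod_mul_choose_div_nat
          (n := n) (k := p * j) (p := p)
        have h1 : n % p = 0 := Nat.eq_zero_of_dvd_of_lt hpn |> fun _ => Nat.mod_eq_zero_of_dvd hpn
        have h2' : (p * j) % p = 0 := Nat.mul_mod_right p j
        have h3 : (p * j) / p = j := Nat.mul_div_cancel_left j hp.pos
        rw [h1, h2', h3, Nat.choose_self, one_mul] at hmod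
        have : n.choose (p * j) % p = (n / p).choose j % p := hmod
        rw [Nat.dvd_iff_mod_eq_zero] at hdvd ⊢
        omega
      obtain ⟨e, he⟩ := ih (n / p) (Nat.div_lt_self hn hp2) hq key
      exact ⟨e + 1, by rw [pow_succ, ← he, Nat.div_mul_cancel hpn]⟩

variable {A B : Type*} [CommRing A] [CommRing B] [Algebra A B]

/-- The fundamental coassociativity identity on coefficients:
`D_p (D_j b) = choose (p+j) j • D_{p+j} b`. -/
lemma coeff_toFun_coeff (δ : ExpMap A B) (b : B) (p j : ℕ) :
    (δ.toFun ((δ.toFun b).coeff j)).coeff p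
      = ((p + j).choose j : B) * (δ.toFun b).coeff (p + j) := by
  have h := congrArg (fun P => (Polynomial.coeff P j).coeff p) (δ.coassoc b)
  simp only [coeff_map] at h
  rw [show δ.toFun.toRingHom ((δ.toFun b).coeff j) = δ.toFun ((δ.toFun b).coeff j) from rfl] at h
  rw [h, Polynomial.eval₂_eq_sum_range]
  rw [Polynomial.finset_sum_coeff, Polynomial.finset_sum_coeff]
  have hterm : ∀ i, (((Polynomial.C.comp Polynomial.C) ((δ.toFun b).coeff i) *
      (Polynomial.C Polynomial.X + Polynomial.X) ^ i).coeff j).coeff p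
      = (δ.toFun b).coeff i * ((if p = i - j then (1:B) else 0) * (i.choose j : B)) := by
    intro i
    rw [RingHom.comp_apply, add_comm (Polynomial.C Polynomial.X) Polynomial.X,
      coeff_C_mul, coeff_X_add_C_pow, ← Polynomial.C_eq_natCast,
      coeff_C_mul, coeff_mul_C, coeff_X_pow]
  simp only [hterm]
  rw [Finset.sum_eq_single (p + j)]
  · simp [Nat.add_sub_cancel, mul_comm]
  · intro i _ hne
    by_cases hc : p = i - j
    · have : i < j := by omega
      simp [Nat.choose_eq_zero_of_lt this]
    · simp [hc]
  · intro hnot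
    have : (δ.toFun b).natDegree < p + j := by
      simp only [Finset.mem_range] at hnot; omega
    simp [coeff_eq_zero_of_natDegree_lt this]

lemma coeff_zero_toFun (δ : ExpMap A B) (b : B) : (δ.toFun b).coeff 0 = b := by
  rw [Polynomial.coeff_zero_eq_eval_zero, δ.eval_zero]

lemma toFun_ne_zero (δ : ExpMap A B) {b : B} (hb : b ≠ 0) : δ.toFun b ≠ 0 := by
  intro h
  apply hb
  rw [← coeff_zero_toFun δ b, h, Polynomial.coeff_zero]

lemma mem_invariants_iff (δ : ExpMap A B) (b : B) :
    b ∈ δ.invariants ↔ δ.toFun b = Polynomial.C b := Iff.rfl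

lemma mem_invariants_of_natDegree_eq_zero (δ : ExpMap A B) {b : B}
    (h : (δ.toFun b).natDegree = 0) : b ∈ δ.invariants := by
  rw [mem_invariants_iff]
  have := Polynomial.eq_C_of_natDegree_eq_zero h
  rw [this, coeff_zero_toFun]

lemma natDegree_toFun_coeff_le (δ : ExpMap A B) (b : B) (j : ℕ) :
    (δ.toFun ((δ.toFun b).coeff j)).natDegree ≤ (δ.toFun b).natDegree - j := by
  rw [Polynomial.natDegree_le_iff_coeff_eq_zero]
  intro p hp
  rw [coeff_toFun_coeff]
  have : (δ.toFun b).natDegree < p + j := by omega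
  rw [coeff_eq_zero_of_natDegree_lt this, mul_zero]

end SliceAux

end SliceAux


section SliceDomain

open Polynomial

namespace SliceAux

variable {A B : Type*} [CommRing A] [CommRing B] [IsDomain B] [Algebra A B]

lemma natDegree_eq_zero_of_lt (δ : ExpMap A B) {x : B} (hx : δ.IsLocalSlice x)
    {y : B} (hy : (δ.toFun y).natDegree < (δ.toFun x).natDegree) :
    (δ.toFun y).natDegree = 0 := by
  by_contra h
  exact absurd (hx.2 y (Nat.pos_of_ne_zero h)) (by omega)

lemma toFun_slice_ne_zero (δ : ExpMap A B) {x : B} (hx : δ.IsLocalSlice x) :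
    δ.toFun x ≠ 0 := by
  intro h
  have := hx.1
  rw [h] at this
  simp at this

lemma slice_choose_cast_eq_zero (δ : ExpMap A B) {x : B} (hx : δ.IsLocalSlice x)
    {i : ℕ} (h0 : 0 < i) (hi : i < (δ.toFun x).natDegree) :
    (((δ.toFun x).natDegree.choose i : B)) = 0 := by
  have hxne : δ.toFun x ≠ 0 := toFun_slice_ne_zero δ hx
  have hl : (δ.toFun x).coeff (δ.toFun x).natDegree ≠ 0 :=
    Polynomial.leadingCoeff_ne_zero.mpr hxne
  have hd : (δ.toFun ((δ.toFun x).coeff i)).natDegree = 0 := by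
    apply natDegree_eq_zero_of_lt δ hx
    exact lt_of_le_of_lt (natDegree_toFun_coeff_le δ x i) (by omega)
  have hc : δ.toFun ((δ.toFun x).coeff i) = Polynomial.C ((δ.toFun x).coeff i) :=
    (mem_invariants_iff δ _).mp (mem_invariants_of_natDegree_eq_zero δ hd)
  have hkey := coeff_toFun_coeff δ x ((δ.toFun x).natDegree - i) i
  rw [hc, Polynomial.coeff_C, if_neg (by omega : ¬ ((δ.toFun x).natDegree - i = 0)),
    Nat.sub_add_cancel (le_of_lt hi)] at hkey
  rcases mul_eq_zero.mp hkey.symm with h | h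
  · exact h
  · exact absurd h hl

lemma dvd_natDegree (δ : ExpMap A B) {x : B} (hx : δ.IsLocalSlice x) (b : B) :
    (δ.toFun x).natDegree ∣ (δ.toFun b).natDegree := by
  set n := (δ.toFun x).natDegree with hn
  by_cases hn1 : n = 1
  · simp [hn1]
  have hn2 : 2 ≤ n := by have := hx.1; omega
  suffices H : ∀ m, ∀ b : B, (δ.toFun b).natDegree = m → n ∣ m by exact H _ b rfl
  intro m
  induction m using Nat.strong_induction_on with
  | _ m ih =>
    intro b hb
    rcases Nat.eq_zero_or_pos m with h0 | h0
    · simp [h0]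
    have hnm : n ≤ m := by
      have := hx.2 b (by omega)
      omega
    by_cases hex : ∃ j, 0 < j ∧ j < m ∧ ((m.choose j : B) ≠ 0)
    · have step : ∀ j, 0 < j → j < m → ((m.choose j : B) ≠ 0) → n ∣ m - j := by
        intro j hj0 hjm hne
        have hbne : δ.toFun b ≠ 0 := by
          intro h
          rw [h] at hb
          simp at hb
          omega
        have hlb : (δ.toFun b).coeff m ≠ 0 := by
          rw [← hb]
          exact Polynomial.leadingCoeff_ne_zero.mpr hbne
        have hkey := coeff_toFun_coeff δ b (m - j) j
        rw [Nat.sub_add_cancel (le_of_lt hjm)] at hkey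
        have hne2 : (δ.toFun ((δ.toFun b).coeff j)).coeff (m - j) ≠ 0 := by
          rw [hkey]
          exact mul_ne_zero hne hlb
        have hle : (δ.toFun ((δ.toFun b).coeff j)).natDegree ≤ m - j := by
          have := natDegree_toFun_coeff_le δ b j
          rwa [hb] at this
        have hge : m - j ≤ (δ.toFun ((δ.toFun b).coeff j)).natDegree :=
          Polynomial.le_natDegree_of_ne_zero hne2
        exact ih (m - j) (by omega) _ (le_antisymm hle hge)
      obtain ⟨j, hj0, hjm, hjne⟩ := hex
      have h1 : n ∣ m - j := step j hj0 hjm hjne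
      have h2 : n ∣ j := by
        have hs : (m.choose (m - j) : B) ≠ 0 := by
          rw [Nat.choose_symm (le_of_lt hjm)]
          exact hjne
        have := step (m - j) (by omega) (by omega) hs
        rwa [Nat.sub_sub_self (le_of_lt hjm)] at this
      have hmj : m = (m - j) + j := by omega
      rw [hmj]
      exact Nat.dvd_add h1 h2
    · push_neg at hex
      haveI := ringChar.charP B
      rcases CharP.char_is_prime_or_zero B (ringChar B) with hp | hp
      · have hchm : ∀ j, 0 < j → j < m → ringChar B ∣ m.choose j := by
          intro j hj hjm
          rw [← CharP.cast_eq_zero_iff B (ringChar B)]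
          exact hex j hj hjm
        have hchn : ∀ i, 0 < i → i < n → ringChar B ∣ n.choose i := by
          intro i hi hin
          rw [← CharP.cast_eq_zero_iff B (ringChar B)]
          exact slice_choose_cast_eq_zero δ hx hi hin
        obtain ⟨a, ha⟩ := prime_pow_of_dvd_choose _ hp m (by omega) hchm
        obtain ⟨e, he⟩ := prime_pow_of_dvd_choose _ hp n (by omega) hchn
        have hea : e ≤ a := by
          rw [← Nat.pow_le_pow_iff_right hp.two_le, ← he, ← ha]
          exact hnm
        rw [he, ha]
        exact pow_dvd_pow _ hea
      · exfalso
        have h1 := hex 1 one_pos (by omega)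
        rw [Nat.choose_one_right] at h1
        haveI : CharP B 0 := by rw [← hp]; exact ringChar.charP B
        haveI := CharP.charP_to_charZero B
        exact absurd (Nat.cast_eq_zero.mp h1) (by omega)

lemma inv_mem_invariants (δ : ExpMap A B) (u : Bˣ) (hu : (↑u : B) ∈ δ.invariants) :
    (↑u⁻¹ : B) ∈ δ.invariants := by
  rw [mem_invariants_iff] at hu ⊢
  have h1 : δ.toFun (↑u * ↑u⁻¹) = 1 := by rw [Units.mul_inv]; exact map_one _
  rw [map_mul, hu] at h1
  calc δ.toFun ↑u⁻¹ = Polynomial.C ↑u⁻¹ * (Polynomial.C ↑u * δ.toFun ↑u⁻¹) := by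
        rw [← mul_assoc, ← map_mul, Units.inv_mul, map_one, one_mul]
    _ = Polynomial.C ↑u⁻¹ := by rw [h1, mul_one]

end SliceAux

end SliceDomain

/-- **Slice Theorem.** Let `k` be a field, `B` a domain containing `k`, and
`δ` a non-trivial exponential map on `B` over `k`. If `x` is a slice of `δ`, then
`B = B^δ[x]` with `x` transcendental over `B^δ`, i.e. `B = (B^δ)^[1]`. -/
theorem slice_theorem
    {k B : Type*} [Field k] [CommRing B] [IsDomain B] [Algebra k B]
    (δ : ExpMap k B) (hδ : δ.IsNontrivial) (x : B) (hx : δ.IsSlice x) :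
    Algebra.adjoin (↥δ.invariants) ({x} : Set B) = ⊤ ∧
      Transcendental (↥δ.invariants) x := by
  obtain ⟨hls, hunit⟩ := hx
  have hn0 : 0 < (δ.toFun x).natDegree := hls.1
  have hxinv : ∀ b : B, (δ.toFun b).natDegree = 0 → b ∈ δ.invariants := fun b h =>
    SliceAux.mem_invariants_of_natDegree_eq_zero δ h
  obtain ⟨u, hu⟩ := hunit
  have hlmem : (δ.toFun x).coeff (δ.toFun x).natDegree ∈ δ.invariants := by
    apply hxinv
    have := SliceAux.natDegree_toFun_coeff_le δ x (δ.toFun x).natDegree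
    omega
  have huinv : (↑u⁻¹ : B) ∈ δ.invariants :=
    SliceAux.inv_mem_invariants δ u (by rw [hu]; exact hlmem)
  have hmemA : ∀ c : B, c ∈ δ.invariants →
      c ∈ Algebra.adjoin (↥δ.invariants) ({x} : Set B) := by
    intro c hc
    have : algebraMap (↥δ.invariants) B ⟨c, hc⟩ ∈
        Algebra.adjoin (↥δ.invariants) ({x} : Set B) := Subalgebra.algebraMap_mem _ _
    simpa using this
  have hxadj : x ∈ Algebra.adjoin (↥δ.invariants) ({x} : Set B) :=
    Algebra.subset_adjoin rfl
  have hℓ : (δ.toFun x).coeff (δ.toFun x).natDegree ≠ 0 :=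
    Polynomial.leadingCoeff_ne_zero.mpr (SliceAux.toFun_slice_ne_zero δ hls)
  constructor
  · -- surjectivity
    rw [eq_top_iff]
    rintro b -
    suffices H : ∀ m, ∀ b : B, (δ.toFun b).natDegree = m →
        b ∈ Algebra.adjoin (↥δ.invariants) ({x} : Set B) from H _ b rfl
    intro m
    induction m using Nat.strong_induction_on with
    | _ m ih =>
      intro b hb
      rcases Nat.eq_zero_or_pos m with h0 | h0
      · exact hmemA b (hxinv b (by omega))
      · obtain ⟨q, hq⟩ : (δ.toFun x).natDegree ∣ m := hb ▸ SliceAux.dvd_natDegree δ hls b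
        have hq0 : 0 < q := by
          rcases Nat.eq_zero_or_pos q with h | h
          · rw [h, mul_zero] at hq; omega
          · exact h
        set c : B := (δ.toFun b).coeff m * (↑u⁻¹ : B) ^ q with hc
        have hcinv : c ∈ δ.invariants := by
          apply Subalgebra.mul_mem
          · apply hxinv
            have := SliceAux.natDegree_toFun_coeff_le δ b m
            omega
          · exact Subalgebra.pow_mem _ huinv q
        have hδb' : δ.toFun (b - c * x ^ q)
            = δ.toFun b - Polynomial.C c * (δ.toFun x) ^ q := by
          rw [map_sub, map_mul, map_pow, (SliceAux.mem_invariants_iff δ c).mp hcinv]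
        have hdegpow : ((δ.toFun x) ^ q).natDegree = m := by
          rw [Polynomial.natDegree_pow, hq, Nat.mul_comm]
        have hcoefpow : ((δ.toFun x) ^ q).coeff m
            = ((δ.toFun x).coeff (δ.toFun x).natDegree) ^ q := by
          rw [← hdegpow, ← Polynomial.leadingCoeff, Polynomial.leadingCoeff_pow]
          rfl
        have hcu : c * ((δ.toFun x).coeff (δ.toFun x).natDegree) ^ q
            = (δ.toFun b).coeff m := by
          rw [hc, ← hu, mul_assoc, ← mul_pow, Units.inv_mul, one_pow, mul_one]
        have hcm : (δ.toFun (b - c * x ^ q)).coeff m = 0 := by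
          rw [hδb', Polynomial.coeff_sub, Polynomial.coeff_C_mul, hcoefpow, hcu, sub_self]
        have hdegb' : (δ.toFun (b - c * x ^ q)).natDegree < m := by
          by_cases hz : δ.toFun (b - c * x ^ q) = 0
          · rw [hz]; simpa using h0
          · have hle : (δ.toFun (b - c * x ^ q)).natDegree ≤ m := by
              rw [hδb']
              refine le_trans (Polynomial.natDegree_sub_le _ _) (max_le (le_of_eq hb) ?_)
              exact le_trans (Polynomial.natDegree_C_mul_le _ _) (le_of_eq hdegpow)
            rcases lt_or_eq_of_le hle with h | h
            · exact h
            · exfalso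
              apply Polynomial.leadingCoeff_ne_zero.mpr hz
              rw [Polynomial.leadingCoeff, h]
              exact hcm
        have hb'mem := ih _ hdegb' (b - c * x ^ q) rfl
        have hbeq : b = (b - c * x ^ q) + c * x ^ q := by ring
        rw [hbeq]
        exact Subalgebra.add_mem _ hb'mem
          (Subalgebra.mul_mem _ (hmemA c hcinv) (Subalgebra.pow_mem _ hxadj q))
  · -- transcendence
    intro halg
    obtain ⟨P, hP0, hPx⟩ := halg
    have hhom : δ.toFun.toRingHom.comp (algebraMap (↥δ.invariants) B)
        = (Polynomial.C : B →+* Polynomial B).comp (algebraMap (↥δ.invariants) B) := by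
      refine RingHom.ext fun a => ?_
      simp only [RingHom.comp_apply]
      have ha : (algebraMap (↥δ.invariants) B a) ∈ δ.invariants := a.2
      exact (SliceAux.mem_invariants_iff δ _).mp ha
    have h0 : Polynomial.eval₂
        ((Polynomial.C : B →+* Polynomial B).comp (algebraMap (↥δ.invariants) B))
        (δ.toFun x) P = 0 := by
      have h1 := Polynomial.hom_eval₂ P (algebraMap (↥δ.invariants) B) δ.toFun.toRingHom x
      have h2 : δ.toFun.toRingHom (Polynomial.eval₂ (algebraMap (↥δ.invariants) B) x P)
          = 0 := by
        rw [← Polynomial.aeval_def, hPx]; exact map_zero _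
      rw [h1] at h2
      rw [← hhom]
      exact h2
    have hco := congrArg
      (fun r => Polynomial.coeff r (P.natDegree * (δ.toFun x).natDegree)) h0
    simp only [Polynomial.coeff_zero] at hco
    rw [Polynomial.eval₂_eq_sum_range, Polynomial.finset_sum_coeff] at hco
    rw [Finset.sum_eq_single P.natDegree] at hco
    · rw [RingHom.comp_apply, Polynomial.coeff_C_mul] at hco
      have hdeg : ((δ.toFun x) ^ P.natDegree).natDegree
          = P.natDegree * (δ.toFun x).natDegree := Polynomial.natDegree_pow _ _
      have hcoef : ((δ.toFun x) ^ P.natDegree).coeff (P.natDegree * (δ.toFun x).natDegree)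
          = ((δ.toFun x).coeff (δ.toFun x).natDegree) ^ P.natDegree := by
        rw [← hdeg, ← Polynomial.leadingCoeff, Polynomial.leadingCoeff_pow]
        rfl
      rw [hcoef] at hco
      rcases mul_eq_zero.mp hco with h | h
      · exact hP0 (Polynomial.leadingCoeff_eq_zero.mp (Subtype.ext h))
      · exact pow_ne_zero P.natDegree hℓ h
    · intro i hi hne
      rw [RingHom.comp_apply, Polynomial.coeff_C_mul]
      have hilt : i < P.natDegree := by
        simp only [Finset.mem_range] at hi
        omega
      have hlt : ((δ.toFun x) ^ i).natDegree < P.natDegree * (δ.toFun x).natDegree := by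
        rw [Polynomial.natDegree_pow]
        exact Nat.mul_lt_mul_of_lt_of_le hilt (le_refl _) hn0
      rw [Polynomial.coeff_eq_zero_of_natDegree_lt hlt, mul_zero]
    · intro h
      exact absurd (Finset.self_mem_range_succ P.natDegree) h
end

section
/- Let A be a domain, B = A[X] a polynomial ring in one variable over A, and δ a non-trivial exponential map on B over A. Then: (1) B^δ = A; (2) X is a local slice of δ; and (3) δ(X) − X ∈ tA[t]. -/
open Polynomial

section ExpAux

open Polynomial

variable {A B : Type*} [CommRing A] [CommRing B] [Algebra A B]

lemma expAux_delta_aeval (δ : ExpMap A B) (X : B) (f : A[X]) :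
    δ.toFun (Polynomial.aeval X f) = (f.map (algebraMap A B)).comp (δ.toFun X) := by
  rw [← Polynomial.aeval_algHom_apply, Polynomial.comp, Polynomial.eval₂_map,
    Polynomial.aeval_def]
  exact Polynomial.eval₂_congr (by ext a; simp [Polynomial.algebraMap_apply]) rfl rfl

lemma expAux_deg [IsDomain B] (hAB : Function.Injective (algebraMap A B))
    (δ : ExpMap A B) (X : B) (f : A[X]) :
    (δ.toFun (Polynomial.aeval X f)).natDegree = f.natDegree * (δ.toFun X).natDegree := by
  rw [expAux_delta_aeval, natDegree_comp, natDegree_map_eq_of_injective hAB]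

end ExpAux

/-- Let `A` be a domain, `B = A[X] = A^[1]` and `δ` a non-trivial
exponential map on `B` over `A`. Then (1) `B^δ = A`; (2) `X` is a local slice of `δ`;
(3) `δ(X) - X ∈ tA[t]`. -/
theorem expMap_on_poly1
    {A B : Type*} [CommRing A] [IsDomain A] [CommRing B] [IsDomain B] [Algebra A B]
    (hAB : Function.Injective (algebraMap A B))
    (X : B) (hX : Function.Bijective (Polynomial.aeval (R := A) X))
    (δ : ExpMap A B) (hδ : δ.IsNontrivial) :
    δ.invariants = ⊥ ∧ δ.IsLocalSlice X ∧
      ∀ j : ℕ, 0 < j → (δ.toFun X).coeff j ∈ Set.range (algebraMap A B) := by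
  obtain ⟨hinj, hsurj⟩ := hX
  set n := (δ.toFun X).natDegree with hn
  have hcoeff0 : ∀ b : B, (δ.toFun b).coeff 0 = b := fun b => by
    rw [Polynomial.coeff_zero_eq_eval_zero, δ.eval_zero]
  have hC : ∀ b : B, (δ.toFun b).natDegree = 0 → δ.toFun b = Polynomial.C b := fun b h => by
    conv_lhs => rw [Polynomial.eq_C_of_natDegree_eq_zero h]
    rw [hcoeff0]
  have hdeg : ∀ f : Polynomial A, (δ.toFun (Polynomial.aeval X f)).natDegree = f.natDegree * n :=
    fun f => expAux_deg hAB δ X f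
  have hnpos : 0 < n := by
    rcases Nat.eq_zero_or_pos n |>.symm with h | h
    · exact h
    · exfalso
      apply hδ
      rw [Algebra.eq_top_iff]
      intro b
      show δ.toFun b = Polynomial.C b
      obtain ⟨f, rfl⟩ := hsurj b
      exact hC _ (by rw [hdeg, h, Nat.mul_zero])
  have hmem_bot : ∀ b : B, (δ.toFun b).natDegree = 0 → b ∈ Set.range (algebraMap A B) := by
    intro b hb
    obtain ⟨f, rfl⟩ := hsurj b
    rw [hdeg] at hb
    have hf0 : f.natDegree = 0 := by
      rcases Nat.mul_eq_zero.mp hb with h | h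
      · exact h
      · omega
    refine ⟨f.coeff 0, ?_⟩
    conv_rhs => rw [Polynomial.eq_C_of_natDegree_eq_zero hf0]
    rw [Polynomial.aeval_C]
  refine ⟨?_, ⟨?_, ?_⟩, ?_⟩
  · apply le_antisymm _ bot_le
    intro b hb
    have hb' : δ.toFun b = Polynomial.C b := hb
    rw [Algebra.mem_bot]
    exact hmem_bot b (by rw [hb', Polynomial.natDegree_C])
  · exact hnpos
  · intro y hy
    obtain ⟨f, rfl⟩ := hsurj y
    rw [hdeg] at hy ⊢
    have hf : 0 < f.natDegree := by
      by_contra h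
      push_neg at h
      interval_cases hfd : f.natDegree; simp_all
    calc n = 1 * n := (one_mul n).symm
      _ ≤ f.natDegree * n := Nat.mul_le_mul_right n hf
  · intro j hj
    set a := (δ.toFun X).coeff j with ha
    have hco := δ.coassoc X
    have hLHS : ((δ.toFun X).map δ.toFun.toRingHom).coeff j = δ.toFun a := by
      rw [Polynomial.coeff_map]; rfl
    have key : δ.toFun a =
        ∑ k ∈ (δ.toFun X).support, Polynomial.C ((δ.toFun X).coeff k) *
          ((Polynomial.C (Polynomial.X : Polynomial B) + Polynomial.X) ^ k).coeff j := by
      rw [← hLHS, hco, Polynomial.eval₂_eq_sum, Polynomial.sum_def,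
        Polynomial.finset_sum_coeff]
      exact Finset.sum_congr rfl fun k _ => by
        rw [RingHom.comp_apply, Polynomial.coeff_C_mul]
    have hbound : (δ.toFun a).natDegree ≤ n - j := by
      rw [key]
      apply Polynomial.natDegree_sum_le_of_forall_le
      intro k hk
      have hk' : k ≤ n := Polynomial.le_natDegree_of_mem_supp k hk
      refine le_trans (Polynomial.natDegree_C_mul_le _ _) ?_
      rw [add_comm, Polynomial.coeff_X_add_C_pow]
      refine le_trans (Polynomial.natDegree_mul_le) ?_
      rw [Polynomial.natDegree_X_pow, Polynomial.natDegree_natCast, Nat.add_zero]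
      omega
    apply hmem_bot
    have hlt : (δ.toFun a).natDegree < n := lt_of_le_of_lt hbound (Nat.sub_lt hnpos hj)
    obtain ⟨g, hg⟩ := hsurj a
    rw [← hg, hdeg] at hlt ⊢
    rcases Nat.eq_zero_or_pos g.natDegree with h | h
    · rw [h, Nat.zero_mul]
    · exfalso
      have : n ≤ g.natDegree * n := by
        calc n = 1 * n := (one_mul n).symm
          _ ≤ g.natDegree * n := Nat.mul_le_mul_right n h
      omega
end

section
/- Let A be a domain, B = A^[n] a polynomial ring in n variables over A, and δ an exponential map on B over A of rank 1. If {X₁,…,Xₙ} is a coordinate system of B over A with A[X₁,…,X_{n−1}] ⊆ B^δ, then B^δ = A[X₁,…,X_{n−1}] and δ(Xₙ) − Xₙ ∈ t·B^δ[t]. -/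
open Polynomial

section AuxProof

open Polynomial

lemma hasseDeriv_map_aux {R S : Type*} [CommRing R] [CommRing S] (f : R →+* S) (k : ℕ)
    (p : R[X]) : hasseDeriv k (p.map f) = (hasseDeriv k p).map f := by
  ext n
  rw [hasseDeriv_coeff, coeff_map, coeff_map, hasseDeriv_coeff, map_mul, map_natCast]

lemma coeff_mul_of_natDegree_le_aux {R : Type*} [CommRing R] {p q : R[X]} {a b : ℕ}
    (hp : p.natDegree ≤ a) (hq : q.natDegree ≤ b) :
    (p * q).coeff (a + b) = p.coeff a * q.coeff b := by
  rw [Polynomial.coeff_mul]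
  apply Finset.sum_eq_single (a, b)
  · rintro ⟨x, y⟩ hxy hne
    rw [Finset.HasAntidiagonal.mem_antidiagonal] at hxy
    by_cases hx : a < x
    · rw [Polynomial.coeff_eq_zero_of_natDegree_lt (hp.trans_lt hx), zero_mul]
    · push_neg at hx
      have hne' : x ≠ a ∨ y ≠ b := by
        by_contra hc
        push_neg at hc
        exact hne (by rw [hc.1, hc.2])
      have hy : b < y := by omega
      rw [Polynomial.coeff_eq_zero_of_natDegree_lt (hq.trans_lt hy), mul_zero]
  · intro h
    simp [Finset.HasAntidiagonal.mem_antidiagonal] at h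

namespace ExpMap

variable {A B : Type*} [CommRing A] [CommRing B] [Algebra A B]

lemma mem_invariants_iff (δ : ExpMap A B) {b : B} :
    b ∈ δ.invariants ↔ δ.toFun b = Polynomial.C b := Iff.rfl

lemma Drel (δ : ExpMap A B) (b : B) (j : ℕ) :
    δ.toFun ((δ.toFun b).coeff j) = hasseDeriv j (δ.toFun b) := by
  have h := congrArg (fun q => Polynomial.coeff q j) (δ.coassoc b)
  simp only [coeff_map, AlgHom.toRingHom_eq_coe, RingHom.coe_coe] at h
  rw [h]; clear h
  have e1 : (δ.toFun b).eval₂ (Polynomial.C.comp Polynomial.C)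
        (Polynomial.C Polynomial.X + Polynomial.X)
      = Polynomial.taylor Polynomial.X ((δ.toFun b).map Polynomial.C) := by
    rw [← Polynomial.eval₂_map, Polynomial.taylor_apply, add_comm]
    rfl
  rw [e1, Polynomial.taylor_coeff, hasseDeriv_map_aux, Polynomial.eval_map]
  exact Polynomial.eval₂_C_X

lemma deltaEval (δ : ExpMap A B) (Y : B) (g : Polynomial B)
    (hg : ∀ i, g.coeff i ∈ δ.invariants) :
    δ.toFun (g.eval Y) = g.eval₂ Polynomial.C (δ.toFun Y) := by
  rw [Polynomial.eval_eq_sum, Polynomial.eval₂_eq_sum, Polynomial.sum_def,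
    Polynomial.sum_def, map_sum]
  refine Finset.sum_congr rfl fun i _ => ?_
  rw [map_mul, map_pow]
  congr 1
  exact hg i

variable [IsDomain B]

lemma partA (δ : ExpMap A B) (R : Subalgebra A B) (Y : B)
    (hRinv : R ≤ δ.invariants)
    (hgen : ∀ b : B, ∃ g : Polynomial B, (∀ i, g.coeff i ∈ R) ∧ g.eval Y = b)
    (hm : 0 < (δ.toFun Y).natDegree) :
    δ.invariants ≤ R := by
  intro b hb
  obtain ⟨g, hgR, hgY⟩ := hgen b
  by_cases hdeg : g.natDegree = 0
  · rw [Polynomial.eq_C_of_natDegree_eq_zero hdeg, Polynomial.eval_C] at hgY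
    exact hgY ▸ hgR 0
  · exfalso
    set F := δ.toFun Y with hF
    set m := F.natDegree with hmdef
    set d := g.natDegree with hd
    have hd1 : 1 ≤ d := Nat.one_le_iff_ne_zero.mpr hdeg
    set h : Polynomial B := g - Polynomial.C b with hh
    have hhc : ∀ i, h.coeff i ∈ δ.invariants := by
      intro i
      rw [hh, Polynomial.coeff_sub]
      refine sub_mem (hRinv (hgR i)) ?_
      rcases Nat.eq_zero_or_pos i with rfl | hi
      · simpa using hb
      · rw [Polynomial.coeff_C, if_neg hi.ne']
        exact zero_mem _
    have hhY : h.eval Y = 0 := by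
      rw [hh, Polynomial.eval_sub, Polynomial.eval_C, hgY, sub_self]
    have hst : h.eval₂ Polynomial.C F = 0 := by
      rw [← δ.deltaEval Y h hhc, hhY, map_zero]
    have hcoeff := congrArg (fun q => Polynomial.coeff q (d * m)) hst
    simp only [Polynomial.coeff_zero] at hcoeff
    rw [Polynomial.eval₂_eq_sum, Polynomial.sum_def, Polynomial.finset_sum_coeff] at hcoeff
    have hdsupp : d ∈ h.support := by
      rw [Polynomial.mem_support_iff]
      have : h.coeff d = g.coeff d := by
        rw [hh, Polynomial.coeff_sub, Polynomial.coeff_C, if_neg (by omega), sub_zero]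
      have hg0 : g ≠ 0 := fun h0 => by rw [h0, Polynomial.natDegree_zero] at hd; omega
      rw [this, hd]
      exact Polynomial.leadingCoeff_ne_zero.mpr hg0
    have hmain : ∑ i ∈ h.support, (Polynomial.C (h.coeff i) * F ^ i).coeff (d * m)
        = h.coeff d * F.leadingCoeff ^ d := by
      rw [Finset.sum_eq_single_of_mem d hdsupp]
      · rw [Polynomial.coeff_C_mul, hmdef, Polynomial.coeff_pow_mul_natDegree]
      · intro i hi hne
        rw [Polynomial.coeff_C_mul]
        have hi' : i ≤ h.natDegree := Polynomial.le_natDegree_of_mem_supp i hi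
        have hhd : h.natDegree ≤ d := by
          rw [hh]
          refine (Polynomial.natDegree_sub_le _ _).trans ?_
          simp [hd]
        have hilt : i < d := lt_of_le_of_ne (hi'.trans hhd) hne
        have hz : (F ^ i).coeff (d * m) = 0 :=
          Polynomial.coeff_eq_zero_of_natDegree_lt (lt_of_le_of_lt
            Polynomial.natDegree_pow_le (Nat.mul_lt_mul_of_lt_of_le hilt le_rfl hm))
        rw [hz, mul_zero]
    rw [hmain] at hcoeff
    have hF0 : F ≠ 0 := by
      intro h0
      have h2 : F.natDegree = 0 := by rw [h0]; exact Polynomial.natDegree_zero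
      have h3 : m = 0 := hmdef.trans h2
      omega
    have hhd0 : h.coeff d ≠ 0 := Polynomial.mem_support_iff.mp hdsupp
    exact (mul_ne_zero hhd0 (pow_ne_zero d (Polynomial.leadingCoeff_ne_zero.mpr hF0)))
      hcoeff


lemma partB (δ : ExpMap A B) (R : Subalgebra A B) (Y : B) (ψ : B →ₐ[A] Polynomial B)
    (hRinv : R ≤ δ.invariants)
    (hgen : ∀ b : B, ∃ g : Polynomial B, (∀ i, g.coeff i ∈ R) ∧ g.eval Y = b)
    (hψR : ∀ r ∈ R, ψ r = Polynomial.C r)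
    (hψY : ψ Y = Polynomial.X) :
    ∀ j : ℕ, 0 < j → (δ.toFun Y).coeff j ∈ R := by
  classical
  -- expansion machinery
  have hψeval : ∀ g : Polynomial B, (∀ i, g.coeff i ∈ R) → ψ (g.eval Y) = g := by
    intro g hg
    rw [Polynomial.eval_eq_sum, Polynomial.sum_def, map_sum]
    have hcong : ∀ i ∈ g.support, ψ (g.coeff i * Y ^ i)
        = Polynomial.monomial i (g.coeff i) := by
      intro i _
      rw [map_mul, map_pow, hψY, hψR _ (hg i), Polynomial.C_mul_X_pow_eq_monomial]
    rw [Finset.sum_congr rfl hcong]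
    exact (g.as_sum_support).symm
  have hexp : ∀ b : B, (∀ i, (ψ b).coeff i ∈ R) ∧ (ψ b).eval Y = b := by
    intro b
    obtain ⟨g, hgR, hgY⟩ := hgen b
    have hψb : ψ b = g := by rw [← hgY, hψeval g hgR]
    rw [hψb]
    exact ⟨hgR, hgY⟩
  have htoR : ∀ b : B, (ψ b).natDegree = 0 → b ∈ R := by
    intro b h0
    have h1 := (hexp b).2
    rw [Polynomial.eq_C_of_natDegree_eq_zero h0, Polynomial.eval_C] at h1
    exact h1 ▸ (hexp b).1 0
  set F : ℕ → B := fun j => (δ.toFun Y).coeff j with hFdef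
  set M := (δ.toFun Y).natDegree with hM
  have hFM : ∀ j, M < j → F j = 0 := fun j hj =>
    Polynomial.coeff_eq_zero_of_natDegree_lt hj
  have hF0 : F 0 = Y := by
    show (δ.toFun Y).coeff 0 = Y
    rw [Polynomial.coeff_zero_eq_eval_zero]
    exact δ.eval_zero Y
  have hδF : ∀ j, δ.toFun (F j) = (ψ (F j)).eval₂ Polynomial.C (δ.toFun Y) := by
    intro j
    have h1 : δ.toFun ((ψ (F j)).eval Y) = (ψ (F j)).eval₂ Polynomial.C (δ.toFun Y) :=
      δ.deltaEval Y (ψ (F j)) (fun i => hRinv ((hexp (F j)).1 i))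
    rw [(hexp (F j)).2] at h1
    exact h1
  have DrelC : ∀ j a : ℕ, (δ.toFun (F j)).coeff a = ((a + j).choose j : B) * F (a + j) := by
    intro j a
    rw [show δ.toFun (F j) = Polynomial.hasseDeriv j (δ.toFun Y) from δ.Drel Y j]
    rw [Polynomial.hasseDeriv_coeff]
  -- Stage 1 : every ψ (F j) has degree ≤ 1
  have S1 : ∀ j, (ψ (F j)).natDegree ≤ 1 := by
    by_contra hcon
    push_neg at hcon
    obtain ⟨jw, hjw⟩ := hcon
    set Dg := (Finset.range (M + 1)).sup (fun j => (ψ (F j)).natDegree) with hDg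
    have hallD : ∀ j, (ψ (F j)).natDegree ≤ Dg := by
      intro j
      rcases le_or_gt j M with hj | hj
      · exact Finset.le_sup (f := fun j => (ψ (F j)).natDegree)
          (Finset.mem_range.mpr (by omega))
      · rw [hFM j hj, map_zero, Polynomial.natDegree_zero]
        exact Nat.zero_le _
    have hD2 : 2 ≤ Dg := le_trans hjw (hallD jw)
    set K := (Finset.range (M + 1)).filter (fun j => (ψ (F j)).natDegree = Dg) with hK
    have hKne : K.Nonempty := by
      obtain ⟨k, hk, hke⟩ := Finset.exists_mem_eq_sup (Finset.range (M + 1))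
        ⟨0, Finset.mem_range.mpr (Nat.succ_pos M)⟩ (fun j => (ψ (F j)).natDegree)
      exact ⟨k, Finset.mem_filter.mpr ⟨hk, hke.symm⟩⟩
    set k := K.max' hKne with hkdef
    have hkD : (ψ (F k)).natDegree = Dg := (Finset.mem_filter.mp (K.max'_mem hKne)).2
    have hklt : ∀ j, k < j → (ψ (F j)).natDegree < Dg := by
      intro j hj
      rcases le_or_gt j M with hjM | hjM
      · rcases Nat.lt_or_ge ((ψ (F j)).natDegree) Dg with hlt | hge
        · exact hlt
        · exfalso
          have hjK : j ∈ K := Finset.mem_filter.mpr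
            ⟨Finset.mem_range.mpr (by omega), le_antisymm (hallD j) hge⟩
          have := K.le_max' j hjK
          omega
      · rw [hFM j hjM, map_zero, Polynomial.natDegree_zero]
        omega
    have hcoeffD : ∀ j, k < j → (ψ (F j)).coeff Dg = 0 := fun j hj =>
      Polynomial.coeff_eq_zero_of_natDegree_lt (hklt j hj)
    have hk1 : 1 ≤ k := by
      by_contra hk0
      push_neg at hk0
      have hk00 : k = 0 := by omega
      rw [hk00, hF0, hψY, Polynomial.natDegree_X] at hkD
      omega
    have hFk0 : ψ (F k) ≠ 0 := by
      intro h0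
      rw [h0, Polynomial.natDegree_zero] at hkD
      omega
    have hL : (ψ (F k)).coeff Dg ≠ 0 := by
      rw [← hkD]
      exact Polynomial.leadingCoeff_ne_zero.mpr hFk0
    -- key power induction
    have key : ∀ e : ℕ,
        (∀ a, (ψ (((δ.toFun Y) ^ e).coeff a)).natDegree ≤ e * Dg) ∧
        (∀ a, e * k < a → (ψ (((δ.toFun Y) ^ e).coeff a)).coeff (e * Dg) = 0) ∧
        (ψ (((δ.toFun Y) ^ e).coeff (e * k))).coeff (e * Dg) = (ψ (F k)).coeff Dg ^ e := by
      intro e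
      induction e with
      | zero =>
        refine ⟨?_, ?_, ?_⟩
        · intro a
          rcases Nat.eq_zero_or_pos a with rfl | ha
          · simp [Polynomial.coeff_one]
          · have ha' : a ≠ 0 := ha.ne'
            simp [Polynomial.coeff_one, ha']
        · intro a ha
          have ha' : a ≠ 0 := by omega
          simp [Polynomial.coeff_one, ha']
        · simp [Polynomial.coeff_one]
      | succ e ih =>
        obtain ⟨ih1, ih2, ih3⟩ := ih
        have hmulcoeff : ∀ a : ℕ, ψ (((δ.toFun Y) ^ (e + 1)).coeff a)
            = ∑ xy ∈ Finset.HasAntidiagonal.antidiagonal a,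
                ψ (((δ.toFun Y) ^ e).coeff xy.1) * ψ (F xy.2) := by
          intro a
          rw [pow_succ, Polynomial.coeff_mul, map_sum]
          exact Finset.sum_congr rfl fun xy _ => map_mul ψ _ _
        have hsplit : (e + 1) * Dg = e * Dg + Dg := by ring
        have hsplitk : (e + 1) * k = e * k + k := by ring
        refine ⟨?_, ?_, ?_⟩
        · intro a
          rw [hmulcoeff]
          apply Polynomial.natDegree_sum_le_of_forall_le
          intro xy _
          refine Polynomial.natDegree_mul_le.trans ?_
          rw [hsplit]
          exact add_le_add (ih1 xy.1) (hallD xy.2)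
        · intro a ha
          rw [hmulcoeff, Polynomial.finset_sum_coeff]
          apply Finset.sum_eq_zero
          rintro ⟨x, y⟩ hxy
          rw [Finset.HasAntidiagonal.mem_antidiagonal] at hxy
          rw [hsplit, coeff_mul_of_natDegree_le_aux (ih1 x) (hallD y)]
          rcases Nat.lt_or_ge (e * k) x with hx | hx
          · rw [ih2 x hx, zero_mul]
          · have hy : k < y := by omega
            rw [hcoeffD y hy, mul_zero]
        · rw [hmulcoeff, Polynomial.finset_sum_coeff]
          have hmem : (e * k, k) ∈ Finset.HasAntidiagonal.antidiagonal ((e + 1) * k) := by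
            rw [Finset.HasAntidiagonal.mem_antidiagonal]
            ring
          rw [Finset.sum_eq_single_of_mem _ hmem]
          · rw [hsplit, coeff_mul_of_natDegree_le_aux (ih1 _) (hallD _), ih3, pow_succ]
          · rintro ⟨x, y⟩ hxy hne
            rw [Finset.HasAntidiagonal.mem_antidiagonal] at hxy
            rw [hsplit, coeff_mul_of_natDegree_le_aux (ih1 x) (hallD y)]
            rcases Nat.lt_or_ge (e * k) x with hx | hx
            · rw [ih2 x hx, zero_mul]
            · have hne' : x ≠ e * k ∨ y ≠ k := by
                by_contra hc
                push_neg at hc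
                exact hne (by rw [hc.1, hc.2])
              have hy : k < y := by omega
              rw [hcoeffD y hy, mul_zero]
    have key1 : ∀ e a : ℕ, (ψ (((δ.toFun Y) ^ e).coeff a)).natDegree ≤ e * Dg :=
      fun e => (key e).1
    have key3 := (key Dg).2.2
    -- the main identity at (a, j) = (Dg * k, k)
    have hid : ((Dg * k + k).choose k : B) * F (Dg * k + k)
        = ∑ i ∈ (ψ (F k)).support, (ψ (F k)).coeff i * ((δ.toFun Y) ^ i).coeff (Dg * k) := by
      rw [← DrelC k (Dg * k), hδF k, Polynomial.eval₂_eq_sum, Polynomial.sum_def,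
        Polynomial.finset_sum_coeff]
      exact Finset.sum_congr rfl fun i _ => by rw [Polynomial.coeff_C_mul]
    have hψid := congrArg (fun b => (ψ b).coeff (Dg * Dg)) hid
    simp only [map_mul, map_sum, map_natCast] at hψid
    -- LHS is zero
    have hDlt : Dg < Dg * Dg := by nlinarith
    have hLHS : ((((Dg * k + k).choose k : Polynomial B)) * ψ (F (Dg * k + k))).coeff (Dg * Dg)
        = 0 := by
      rw [← Polynomial.C_eq_natCast, Polynomial.coeff_C_mul,
        Polynomial.coeff_eq_zero_of_natDegree_lt (lt_of_le_of_lt (hallD _) hDlt), mul_zero]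
    -- RHS is L ^ (Dg + 1)
    have hRHS : (∑ i ∈ (ψ (F k)).support,
          ψ ((ψ (F k)).coeff i) * ψ (((δ.toFun Y) ^ i).coeff (Dg * k))).coeff (Dg * Dg)
        = (ψ (F k)).coeff Dg ^ (Dg + 1) := by
      rw [Polynomial.finset_sum_coeff]
      have hDsupp : Dg ∈ (ψ (F k)).support := by
        rw [Polynomial.mem_support_iff]
        exact hL
      rw [Finset.sum_eq_single_of_mem Dg hDsupp]
      · rw [hψR _ ((hexp (F k)).1 Dg), Polynomial.coeff_C_mul, key3, pow_succ']
      · intro i hi hne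
        have hile : i < Dg := lt_of_le_of_ne
          ((Polynomial.le_natDegree_of_mem_supp i hi).trans hkD.le) hne
        have hz : (ψ (((δ.toFun Y) ^ i).coeff (Dg * k))).coeff (Dg * Dg) = 0 :=
          Polynomial.coeff_eq_zero_of_natDegree_lt (lt_of_le_of_lt (key1 i (Dg * k))
            (Nat.mul_lt_mul_of_lt_of_le hile le_rfl (by omega)))
        rw [hψR _ ((hexp (F k)).1 i), Polynomial.coeff_C_mul, hz, mul_zero]
    exact pow_ne_zero (Dg + 1) hL (by rw [← hRHS, ← hψid, hLHS])
  -- Stage 2 : coefficients of index ≥ 1 of ψ (F j) at degree 1 vanish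
  set p : ℕ → B := fun j => (ψ (F j)).coeff 1 with hpdef
  have hpR : ∀ j, p j ∈ R := fun j => (hexp (F j)).1 1
  have hrel : ∀ a j : ℕ, 0 < a → p j * F a = ((a + j).choose j : B) * F (a + j) := by
    intro a j ha
    have h1 : (δ.toFun (F j)).coeff a = ((a + j).choose j : B) * F (a + j) := DrelC j a
    have hg1 : ψ (F j) = Polynomial.C (p j) * Polynomial.X
        + Polynomial.C ((ψ (F j)).coeff 0) :=
      Polynomial.eq_X_add_C_of_natDegree_le_one (S1 j)
    rw [hδF j, hg1, Polynomial.eval₂_add, Polynomial.eval₂_mul, Polynomial.eval₂_C,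
      Polynomial.eval₂_X, Polynomial.eval₂_C, Polynomial.coeff_add,
      Polynomial.coeff_C_mul, Polynomial.coeff_C, if_neg ha.ne', add_zero] at h1
    exact h1
  have hps : ∀ j, 0 < j → p j = 0 := by
    by_contra hcon
    push_neg at hcon
    obtain ⟨jw, hjw0, hjwne⟩ := hcon
    have hjwM : jw ≤ M := by
      by_contra hgt
      push_neg at hgt
      apply hjwne
      show (ψ (F jw)).coeff 1 = 0
      rw [hFM jw hgt, map_zero, Polynomial.coeff_zero]
    set J := (Finset.range (M + 1)).filter (fun j => 0 < j ∧ p j ≠ 0) with hJ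
    have hJne : J.Nonempty :=
      ⟨jw, Finset.mem_filter.mpr ⟨Finset.mem_range.mpr (by omega), hjw0, hjwne⟩⟩
    set j0 := J.max' hJne with hj0def
    have hj0 : 0 < j0 ∧ p j0 ≠ 0 := (Finset.mem_filter.mp (J.max'_mem hJne)).2
    have hout : ∀ j, j0 < j → p j = 0 := by
      intro j hj
      by_contra hne
      have hjM : j ≤ M := by
        by_contra hgt
        push_neg at hgt
        apply hne
        show (ψ (F j)).coeff 1 = 0
        rw [hFM j hgt, map_zero, Polynomial.coeff_zero]
      have hjJ : j ∈ J := Finset.mem_filter.mpr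
        ⟨Finset.mem_range.mpr (by omega), by omega, hne⟩
      have := J.le_max' j hjJ
      omega
    have hkey := congrArg (fun b => (ψ b).coeff 1) (hrel j0 j0 hj0.1)
    simp only [map_mul, map_natCast] at hkey
    rw [hψR _ (hpR j0), Polynomial.coeff_C_mul, ← Polynomial.C_eq_natCast,
      Polynomial.coeff_C_mul] at hkey
    have h2j0 : p (j0 + j0) = 0 := hout (j0 + j0) (by omega)
    rw [show (ψ (F (j0 + j0))).coeff 1 = p (j0 + j0) from rfl, h2j0, mul_zero] at hkey
    exact hj0.2 (mul_self_eq_zero.mp hkey)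
  -- conclusion
  intro j hj
  apply htoR
  rcases Nat.lt_or_ge ((ψ (F j)).natDegree) 1 with hlt | hge
  · exact Nat.lt_one_iff.mp hlt
  · exfalso
    have hdeg1 : (ψ (F j)).natDegree = 1 := le_antisymm (S1 j) hge
    have hne : ψ (F j) ≠ 0 := by
      intro h0
      rw [h0, Polynomial.natDegree_zero] at hdeg1
      omega
    have := Polynomial.leadingCoeff_ne_zero.mpr hne
    rw [Polynomial.leadingCoeff, hdeg1] at this
    exact this (hps j hj)

end ExpMap

end AuxProof

/-- Let `A` be a domain, `B = A^[n]`, and `δ` an exponential map on `B`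
over `A` of rank `1`. If `{X₁, …, Xₙ}` is a coordinate system with
`A[X₁, …, X_{n-1}] ⊆ B^δ`, then `B^δ = A[X₁, …, X_{n-1}]` and `δ(Xₙ) - Xₙ ∈ t·B^δ[t]`. -/
theorem invariants_of_rank_one
    {A B : Type*} [CommRing A] [IsDomain A] [CommRing B] [IsDomain B] [Algebra A B]
    (hAB : Function.Injective (algebraMap A B))
    {n : ℕ} (hn : 0 < n) (X : Fin n → B) (hX : IsCoordSystem A X)
    (δ : ExpMap A B) (hrank : δ.rank n = 1)
    (hinv : Algebra.adjoin A (X '' {i : Fin n | (i : ℕ) < n - 1}) ≤ δ.invariants) :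
    δ.invariants = Algebra.adjoin A (X '' {i : Fin n | (i : ℕ) < n - 1}) ∧
      ∀ j : ℕ, 0 < j →
        (δ.toFun (X ⟨n - 1, by omega⟩)).coeff j ∈ δ.invariants := by
  classical
  let Y : B := X ⟨n - 1, by omega⟩
  have hYdef : Y = X ⟨n - 1, by omega⟩ := rfl
  set R : Subalgebra A B := Algebra.adjoin A (X '' {i : Fin n | (i : ℕ) < n - 1}) with hR
  let φ : MvPolynomial (Fin n) A ≃ₐ[A] B := AlgEquiv.ofBijective (MvPolynomial.aeval X) hX
  let v : Fin n → Polynomial B := fun i =>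
    if (i : ℕ) < n - 1 then Polynomial.C (X i) else Polynomial.X
  let ψ : B →ₐ[A] Polynomial B := (MvPolynomial.aeval v).comp (φ.symm : B →ₐ[A] _)
  have hψX : ∀ i : Fin n, ψ (X i) = v i := by
    intro i
    have h1 : φ.symm (X i) = MvPolynomial.X i := by
      rw [AlgEquiv.symm_apply_eq]
      exact (MvPolynomial.aeval_X X i).symm
    show (MvPolynomial.aeval v) (φ.symm (X i)) = v i
    rw [h1, MvPolynomial.aeval_X]
  have hlast : ∀ i : Fin n, ¬ ((i : ℕ) < n - 1) → X i = Y := by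
    intro i hi
    have hieq : i = ⟨n - 1, by omega⟩ := Fin.ext (by
      have := i.isLt
      simp only []
      omega)
    rw [hieq]
  have hψY : ψ Y = Polynomial.X := by
    rw [hYdef, hψX]
    show (if ((⟨n - 1, by omega⟩ : Fin n) : ℕ) < n - 1 then Polynomial.C (X _)
      else Polynomial.X) = Polynomial.X
    rw [if_neg (by simp)]
  have hψR : ∀ r ∈ R, ψ r = Polynomial.C r := by
    intro r hr
    rw [hR] at hr
    induction hr using Algebra.adjoin_induction with
    | mem x hx =>
      obtain ⟨i, hi, rfl⟩ := hx
      rw [hψX]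
      show (if (i : ℕ) < n - 1 then Polynomial.C (X i) else Polynomial.X) = Polynomial.C (X i)
      rw [if_pos (show (i : ℕ) < n - 1 from hi)]
    | algebraMap r =>
      rw [AlgHom.commutes, Polynomial.algebraMap_apply]
    | add x y hx hy ihx ihy => rw [map_add, ihx, ihy, map_add]
    | mul x y hx hy ihx ihy => rw [map_mul, ihx, ihy, map_mul]
  have htop : Algebra.adjoin A (Set.range X) = ⊤ := by
    rw [Algebra.adjoin_range_eq_range_aeval]
    exact (AlgHom.range_eq_top _).mpr hX.2
  have hgen : ∀ b : B, ∃ g : Polynomial B, (∀ i, g.coeff i ∈ R) ∧ g.eval Y = b := by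
    intro b
    have hb : b ∈ Algebra.adjoin A (Set.range X) := by rw [htop]; exact trivial
    induction hb using Algebra.adjoin_induction with
    | mem x hx =>
      obtain ⟨i, rfl⟩ := hx
      by_cases hi : (i : ℕ) < n - 1
      · refine ⟨Polynomial.C (X i), fun l => ?_, Polynomial.eval_C⟩
        rcases Nat.eq_zero_or_pos l with rfl | hl
        · rw [Polynomial.coeff_C_zero]
          exact Algebra.subset_adjoin ⟨i, hi, rfl⟩
        · rw [Polynomial.coeff_C, if_neg hl.ne']
          exact zero_mem _
      · refine ⟨Polynomial.X, fun l => ?_, by rw [Polynomial.eval_X, hlast i hi]⟩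
        rw [Polynomial.coeff_X]
        split
        · exact one_mem _
        · exact zero_mem _
    | algebraMap r =>
      refine ⟨Polynomial.C ((algebraMap A B) r), fun l => ?_, Polynomial.eval_C⟩
      rcases Nat.eq_zero_or_pos l with rfl | hl
      · rw [Polynomial.coeff_C_zero]
        exact Subalgebra.algebraMap_mem _ _
      · rw [Polynomial.coeff_C, if_neg hl.ne']
        exact zero_mem _
    | add x y hx hy ihx ihy =>
      obtain ⟨g1, hg1, he1⟩ := ihx
      obtain ⟨g2, hg2, he2⟩ := ihy
      exact ⟨g1 + g2, fun l => by rw [Polynomial.coeff_add]; exact add_mem (hg1 l) (hg2 l),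
        by rw [Polynomial.eval_add, he1, he2]⟩
    | mul x y hx hy ihx ihy =>
      obtain ⟨g1, hg1, he1⟩ := ihx
      obtain ⟨g2, hg2, he2⟩ := ihy
      refine ⟨g1 * g2, fun l => ?_, by rw [Polynomial.eval_mul, he1, he2]⟩
      rw [Polynomial.coeff_mul]
      exact sum_mem fun c _ => mul_mem (hg1 c.1) (hg2 c.2)
  have hnotop : δ.invariants ≠ ⊤ := by
    intro htopinv
    have hmem : 0 ∈ {r : ℕ | ∃ X' : Fin n → B, IsCoordSystem A X' ∧
        Algebra.adjoin A (X' '' {i : Fin n | (i : ℕ) < n - r}) ≤ δ.invariants} :=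
      ⟨X, hX, by rw [htopinv]; exact le_top⟩
    have h0 : δ.rank n = 0 := by
      unfold ExpMap.rank
      exact Nat.sInf_eq_zero.mpr (Or.inl hmem)
    rw [hrank] at h0
    exact one_ne_zero h0
  have hm : 0 < (δ.toFun Y).natDegree := by
    rcases Nat.eq_zero_or_pos (δ.toFun Y).natDegree with h0 | h
    · exfalso
      have hYC : δ.toFun Y = Polynomial.C Y := by
        have he := Polynomial.eq_C_of_natDegree_eq_zero h0
        rw [he]
        congr 1
        rw [Polynomial.coeff_zero_eq_eval_zero]
        exact δ.eval_zero Y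
      apply hnotop
      rw [eq_top_iff, ← htop, Algebra.adjoin_le_iff]
      rintro _ ⟨i, rfl⟩
      by_cases hi : (i : ℕ) < n - 1
      · exact hinv (Algebra.subset_adjoin ⟨i, hi, rfl⟩)
      · rw [hlast i hi]
        exact hYC
    · exact h
  have hA : δ.invariants ≤ R := δ.partA R Y hinv hgen hm
  have hB := δ.partB R Y ψ hinv hgen hψR hψY
  exact ⟨le_antisymm hA hinv, fun j hj => hinv (hB j hj)⟩
end

section
/- Let A be a domain and B = A^[n] a polynomial ring in n variables over A. Every exponential map δ on B over A of rank 1 is rigid and triangular over A. -/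
open Polynomial

section AuxRankOne

open Polynomial

variable {A B : Type*} [CommRing A] [CommRing B] [Algebra A B]

lemma ExpMap.mem_invariants_iff_s7 (δ : ExpMap A B) {b : B} :
    b ∈ δ.invariants ↔ δ.toFun b = Polynomial.C b := Iff.rfl

variable [IsDomain B]

set_option maxHeartbeats 1000000 in
set_option synthInstance.maxHeartbeats 400000 in
/-- The key structural lemma: if `X` is a coordinate system with the first `n-1`
variables invariant and `δ` is nontrivial, then the invariants are exactly
`A[X₁,…,X_{n-1}]`, the last variable is a local slice, and all higher coefficients
of `δ(Xₙ)` lie in `A[X₁,…,X_{n-1}]`. -/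
lemma ExpMap.rank_one_key (δ : ExpMap A B) {n : ℕ} (hn : 0 < n) (X : Fin n → B)
    (hX : IsCoordSystem A X)
    (hC : Algebra.adjoin A (X '' {i : Fin n | (i : ℕ) < n - 1}) ≤ δ.invariants)
    (hnt : δ.invariants ≠ ⊤) :
    δ.invariants = Algebra.adjoin A (X '' {i : Fin n | (i : ℕ) < n - 1})
    ∧ δ.IsLocalSlice (X ⟨n - 1, by omega⟩)
    ∧ (∀ j : ℕ, 0 < j →
        (δ.toFun (X ⟨n - 1, by omega⟩)).coeff j ∈
          Algebra.adjoin A (X '' {i : Fin n | (i : ℕ) < n - 1})) := by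
  classical
  set last : Fin n := ⟨n - 1, by omega⟩ with hlast
  set S : Set (Fin n) := {i : Fin n | (i : ℕ) < n - 1} with hS
  set C' : Subalgebra A B := Algebra.adjoin A (X '' S) with hC'
  -- algebraic independence
  have hAI : AlgebraicIndependent A X :=
    algebraicIndependent_iff_injective_aeval.mpr hX.1
  -- X last is transcendental over C'
  have htr : Transcendental C' (X last) := by
    have hx' : AlgebraicIndependent A (X ∘ (Subtype.val : S → Fin n)) :=
      hAI.comp _ Subtype.val_injective
    have hg : Function.Injective
        (fun o : Option S => o.elim last (Subtype.val : S → Fin n)) := by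
      rintro (_ | ⟨a, ha⟩) (_ | ⟨b, hb⟩) h
      · rfl
      · exfalso
        simp only [Option.elim] at h
        have : (last : ℕ) = (b : ℕ) := congrArg Fin.val h
        simp only [hlast] at this
        have hb' : (b : ℕ) < n - 1 := hb
        omega
      · exfalso
        simp only [Option.elim] at h
        have : (a : ℕ) = (last : ℕ) := congrArg Fin.val h
        simp only [hlast] at this
        have ha' : (a : ℕ) < n - 1 := ha
        omega
      · simp only [Option.elim] at h
        exact congrArg Option.some (Subtype.ext (Fin.ext (congrArg Fin.val h)))
    have h2 : AlgebraicIndependent A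
        (fun o : Option S => Option.elim o (X last) (X ∘ (Subtype.val : S → Fin n))) := by
      have := hAI.comp _ hg
      convert this using 1
      funext o
      cases o <;> rfl
    have h3 := (hx'.option_iff_transcendental (X last)).mp h2
    have hrange : Set.range (X ∘ (Subtype.val : S → Fin n)) = X '' S := by
      rw [Set.range_comp, Subtype.range_coe]
    rwa [hrange] at h3
  -- the polynomial evaluation map ψ : C'[Y] → B
  set ψ : Polynomial C' →ₐ[C'] B := Polynomial.aeval (X last) with hψ
  have hinj : Function.Injective ψ := transcendental_iff_injective.mp htr
  have htop : Algebra.adjoin A (Set.range X) = ⊤ := by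
    rw [Algebra.adjoin_range_eq_range_aeval]
    exact (AlgHom.range_eq_top _).mpr hX.2
  have hsurj : Function.Surjective ψ := by
    intro b
    have hb : b ∈ Subalgebra.restrictScalars A ψ.range := by
      have hle : Algebra.adjoin A (Set.range X) ≤ Subalgebra.restrictScalars A ψ.range := by
        apply Algebra.adjoin_le
        rintro _ ⟨i, rfl⟩
        by_cases hi : (i : ℕ) < n - 1
        · have hmem : X i ∈ ψ.range := by
            rw [AlgHom.mem_range]
            refine ⟨Polynomial.C ⟨X i, Algebra.subset_adjoin ⟨i, hi, rfl⟩⟩, ?_⟩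
            rw [hψ, Polynomial.aeval_C]
            rfl
          exact hmem
        · have hieq : i = last := Fin.ext (by have := i.isLt; simp only [hlast]; omega)
          have hmem : X i ∈ ψ.range := by
            rw [AlgHom.mem_range]
            exact ⟨Polynomial.X, by rw [hψ, Polynomial.aeval_X, hieq]⟩
          exact hmem
      exact hle (htop ▸ Algebra.mem_top)
    exact hb
  set q : Polynomial B := δ.toFun (X last) with hq
  set d : ℕ := q.natDegree with hd
  have hfinj : Function.Injective (algebraMap C' B) := fun x y hxy =>
    Subtype.ext hxy
  -- δ on ψ p
  have hψδ : ∀ p : Polynomial C',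
      δ.toFun (ψ p) = (p.map (algebraMap C' B)).comp q := by
    intro p
    induction p using Polynomial.induction_on with
    | C a =>
        have ha : (a : B) ∈ δ.invariants := hC a.2
        rw [ExpMap.mem_invariants_iff_s7] at ha
        have h1 : ψ (Polynomial.C a) = (a : B) := by
          simp only [hψ, Polynomial.aeval_C]; rfl
        rw [h1, ha, Polynomial.map_C, Polynomial.C_comp]
        rfl
    | add p r hp hr =>
        rw [map_add ψ, map_add δ.toFun, Polynomial.map_add, Polynomial.add_comp, hp, hr]
    | monomial k a ih =>
        have hsplit : (Polynomial.C a * Polynomial.X ^ (k + 1) : Polynomial C')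
            = (Polynomial.C a * Polynomial.X ^ k) * Polynomial.X := by ring
        rw [hsplit, map_mul, map_mul, Polynomial.map_mul, Polynomial.mul_comp, ih]
        congr 1
        simp [hψ, hq]
  have hdeg : ∀ p : Polynomial C',
      (δ.toFun (ψ p)).natDegree = p.natDegree * d := by
    intro p
    rw [hψδ, Polynomial.natDegree_comp, Polynomial.natDegree_map_eq_of_injective hfinj]
  -- positivity of d
  have hd0 : 0 < d := by
    rcases Nat.eq_zero_or_pos d with h0 | h
    · exfalso
      apply hnt
      have hlastinv : X last ∈ δ.invariants := by
        rw [ExpMap.mem_invariants_iff_s7]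
        have := Polynomial.eq_C_of_natDegree_eq_zero h0
        rw [Polynomial.coeff_zero_eq_eval_zero, δ.eval_zero] at this
        exact this
      rw [eq_top_iff, ← htop]
      apply Algebra.adjoin_le
      rintro _ ⟨i, rfl⟩
      by_cases hi : (i : ℕ) < n - 1
      · exact hC (Algebra.subset_adjoin ⟨i, hi, rfl⟩)
      · have hieq : i = last := Fin.ext (by have := i.isLt; simp only [hlast]; omega)
        rw [hieq]; exact hlastinv
    · exact h
  -- invariants = C'
  have hinv : δ.invariants = C' := by
    apply le_antisymm
    · intro b hb
      obtain ⟨p, rfl⟩ := hsurj b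
      rw [ExpMap.mem_invariants_iff_s7] at hb
      have h1 : (δ.toFun (ψ p)).natDegree = 0 := by rw [hb]; exact Polynomial.natDegree_C _
      rw [hdeg] at h1
      have hp0 : p.natDegree = 0 := by
        rcases Nat.mul_eq_zero.mp h1 with h | h
        · exact h
        · omega
      obtain ⟨c, rfl⟩ := Polynomial.natDegree_eq_zero.mp hp0
      have h2 : ψ (Polynomial.C c) = (c : B) := by
        simp only [hψ, Polynomial.aeval_C]; rfl
      rw [h2]
      exact c.2
    · exact hC
  refine ⟨hinv, ?_, ?_⟩
  · -- local slice
    refine ⟨hd0, ?_⟩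
    intro y hy
    obtain ⟨p, rfl⟩ := hsurj y
    rw [hdeg] at hy ⊢
    have hp : 0 < p.natDegree := Nat.pos_of_ne_zero (fun h => by rw [h, zero_mul] at hy; omega)
    exact Nat.le_mul_of_pos_left d hp
  · -- coefficients
    intro j hj
    have hbound : (δ.toFun (q.coeff j)).natDegree ≤ d - j := by
      have h1 : δ.toFun (q.coeff j) = (q.map δ.toFun.toRingHom).coeff j :=
        (Polynomial.coeff_map _ _).symm
      rw [h1, δ.coassoc (X last), Polynomial.eval₂_eq_sum, Polynomial.sum_def,
        Polynomial.finset_sum_coeff]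
      apply Polynomial.natDegree_sum_le_of_forall_le
      intro e he
      have hed : e ≤ d := Polynomial.le_natDegree_of_mem_supp e he
      rw [RingHom.comp_apply, Polynomial.coeff_C_mul,
        add_comm (Polynomial.C (Polynomial.X : Polynomial B)) Polynomial.X,
        Polynomial.coeff_X_add_C_pow]
      calc (Polynomial.C (q.coeff e) *
              ((Polynomial.X : Polynomial B) ^ (e - j) * (e.choose j : Polynomial B))).natDegree
          ≤ (Polynomial.C (q.coeff e)).natDegree +
              ((Polynomial.X : Polynomial B) ^ (e - j) * (e.choose j : Polynomial B)).natDegree :=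
            Polynomial.natDegree_mul_le
        _ ≤ 0 + (((Polynomial.X : Polynomial B) ^ (e - j)).natDegree +
              ((e.choose j : Polynomial B)).natDegree) := by
            gcongr
            · exact le_of_eq (Polynomial.natDegree_C _)
            · exact Polynomial.natDegree_mul_le
        _ ≤ d - j := by
            rw [Polynomial.natDegree_X_pow, Polynomial.natDegree_natCast]
            omega
    obtain ⟨p, hp⟩ := hsurj (q.coeff j)
    have hdp := hdeg p
    rw [hp] at hdp
    rw [hdp] at hbound
    have hp0 : p.natDegree = 0 := by
      by_contra h
      have h2 : d ≤ p.natDegree * d := Nat.le_mul_of_pos_left d (Nat.pos_of_ne_zero h)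
      omega
    obtain ⟨c, rfl⟩ := Polynomial.natDegree_eq_zero.mp hp0
    have h2 : ψ (Polynomial.C c) = (c : B) := by
      simp only [hψ, Polynomial.aeval_C]; rfl
    rw [← hp, h2]
    exact c.2

end AuxRankOne
/-- Let `A` be a domain and `B = A^[n]`. Every exponential map on `B`
over `A` of rank `1` is rigid and triangular over `A`. -/
theorem rank_one_rigid_and_triangular
    {A B : Type*} [CommRing A] [IsDomain A] [CommRing B] [IsDomain B] [Algebra A B]
    (hAB : Function.Injective (algebraMap A B))
    {n : ℕ} (hB : ∃ X : Fin n → B, IsCoordSystem A X)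
    (δ : ExpMap A B) (hrank : δ.rank n = 1) :
    δ.IsRigid n ∧ δ.IsTriangular n := by
  classical
  set T : Set ℕ := {r : ℕ | ∃ X : Fin n → B, IsCoordSystem A X ∧
    Algebra.adjoin A (X '' {i : Fin n | (i : ℕ) < n - r}) ≤ δ.invariants} with hT
  have hrT : sInf T = 1 := hrank
  -- invariants are a proper subalgebra
  have hnt : δ.invariants ≠ ⊤ := by
    intro h
    obtain ⟨X0, hX0⟩ := hB
    have h0 : 0 ∈ T := ⟨X0, hX0, by rw [h]; exact le_top⟩
    have := Nat.sInf_le h0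
    omega
  -- n is positive
  have hn : 0 < n := by
    by_contra h
    push_neg at h
    obtain ⟨X0, hX0⟩ := hB
    have himg : X0 '' {i : Fin n | (i : ℕ) < n - 0} = ∅ := by
      rw [Set.eq_empty_iff_forall_notMem]
      rintro x ⟨i, -, -⟩
      exact absurd i.isLt (by omega)
    have h0 : 0 ∈ T := ⟨X0, hX0, by rw [himg, Algebra.adjoin_empty]; exact bot_le⟩
    have := Nat.sInf_le h0
    omega
  have hTne : T.Nonempty := by
    by_contra h
    rw [Set.not_nonempty_iff_eq_empty] at h
    rw [h, Nat.sInf_empty] at hrT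
    omega
  have h1 : 1 ∈ T := hrT ▸ Nat.sInf_mem hTne
  obtain ⟨X, hXcs, hXC⟩ := h1
  have key := δ.rank_one_key hn X hXcs hXC hnt
  constructor
  · -- rigidity
    intro Y Y' hY hY'
    simp only [ExpMap.InGamma, hrank] at hY hY'
    simp only [hrank]
    have kY := δ.rank_one_key hn Y hY.1 hY.2 hnt
    have kY' := δ.rank_one_key hn Y' hY'.1 hY'.2 hnt
    rw [← kY.1, ← kY'.1]
  · -- triangularity
    refine ⟨X, hXcs, ?_, ?_⟩
    · intro i j hj
      by_cases hi : (i : ℕ) < n - 1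
      · have hmem : X i ∈ δ.invariants := hXC (Algebra.subset_adjoin ⟨i, hi, rfl⟩)
        rw [ExpMap.mem_invariants_iff_s7] at hmem
        rw [hmem, Polynomial.coeff_C, if_neg (by omega)]
        exact zero_mem _
      · have hieq : (i : ℕ) = n - 1 := by have := i.isLt; omega
        rw [show {l : Fin n | (l : ℕ) < (i : ℕ)} = {l : Fin n | (l : ℕ) < n - 1} by rw [hieq]]
        have hieq' : i = ⟨n - 1, by omega⟩ := Fin.ext hieq
        rw [hieq']
        exact key.2.2 j hj
    · intro i hne _
      by_cases hi : (i : ℕ) < n - 1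
      · exfalso
        apply hne
        have hmem : X i ∈ δ.invariants := hXC (Algebra.subset_adjoin ⟨i, hi, rfl⟩)
        exact hmem
      · have hieq' : i = ⟨n - 1, by omega⟩ :=
          Fin.ext (show (i : ℕ) = n - 1 by have := i.isLt; omega)
        rw [hieq']
        exact key.2.1
end

section
/- Let k be a field of arbitrary characteristic and B = k^[3] a polynomial ring in three variables over k. If δ is an exponential map on B over k that is triangular with respect to a coordinate system {X,Y,Z} and rank(δ) = 2, then δ(X) = X. In particular, any triangular exponential map of k^[3] has rank at most 2. -/
open Polynomial

section Aux

open Polynomial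



section Binomial

variable {k : Type*} [Field k]

lemma choose_ordProj_cast {p : ℕ} (hp : p.Prime) [CharP k p] {M : ℕ} (hM : 0 < M) :
    ((M.choose (p ^ (M.factorization p)) : ℕ) : k) =
      ((M / p ^ (M.factorization p) : ℕ) : k) := by
  haveI : Fact p.Prime := ⟨hp⟩
  set v := M.factorization p with hv
  set q := p ^ v with hqdef
  set m := M / q with hm
  have hq0 : 0 < q := pow_pos hp.pos v
  have hqm : q * m = M := Nat.ordProj_mul_ordCompl_eq_self M p
  have hm0 : 0 < m := Nat.pos_of_ne_zero (fun h => by rw [h, mul_zero] at hqm; omega)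
  have h1 : (((X : k[X]) + 1) ^ M).coeff q = ((M.choose q : ℕ) : k) :=
    Polynomial.coeff_X_add_one_pow k M q
  have h2 : ((X : k[X]) + 1) ^ M = ((X : k[X]) ^ q + 1) ^ m := by
    rw [← hqm, pow_mul, add_pow_char_pow, one_pow]
  have h3 : (((X : k[X]) ^ q + 1) ^ m).coeff q = ((m : ℕ) : k) := by
    rw [add_pow, Polynomial.finset_sum_coeff]
    have key : ∀ i ∈ Finset.range (m + 1),
        (((X : k[X]) ^ q) ^ i * 1 ^ (m - i) * (m.choose i : k[X])).coeff q
          = if i = 1 then ((m : ℕ) : k) else 0 := by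
      intro i _
      rw [one_pow, mul_one, ← pow_mul, ← Polynomial.C_eq_natCast, mul_comm,
        Polynomial.coeff_C_mul, Polynomial.coeff_X_pow]
      by_cases h : i = 1
      · subst h; simp
      · have hne : ¬(q = q * i) := by
          intro hqq
          have h2 : q * 1 = q * i := by omega
          exact h (Nat.eq_of_mul_eq_mul_left hq0 h2).symm
        simp [hne, h]
    rw [Finset.sum_congr rfl key, Finset.sum_ite_eq' (Finset.range (m + 1)) 1]
    simp [Nat.lt_succ, hm0]
  rw [← h1, h2, h3]

lemma eq_pow_of_choose_cast_eq_zero {p : ℕ} (hp : p.Prime) [CharP k p] {N : ℕ} (hN : 0 < N)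
    (h : ∀ i, 0 < i → i < N → ((N.choose i : ℕ) : k) = 0) :
    N = p ^ (N.factorization p) := by
  set v := N.factorization p
  set q := p ^ v with hq
  have hq0 : 0 < q := pow_pos hp.pos v
  have hqm : q * (N / q) = N := Nat.ordProj_mul_ordCompl_eq_self N p
  have hnd : ¬ p ∣ N / q := Nat.not_dvd_ordCompl hp hN.ne'
  have hcast : ((N / q : ℕ) : k) ≠ 0 := by
    rw [Ne, CharP.cast_eq_zero_iff k p]
    exact hnd
  by_contra hne
  have hm1 : N / q ≠ 1 := by
    intro h1
    rw [h1, mul_one] at hqm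
    exact hne hqm.symm
  have hm0 : 0 < N / q := Nat.pos_of_ne_zero (fun h0 => by rw [h0, mul_zero] at hqm; omega)
  have hqlt : q < N := by
    have : 2 ≤ N / q := by omega
    nlinarith [hqm]
  have := h q hq0 hqlt
  rw [choose_ordProj_cast hp hN] at this
  exact hcast this

lemma eq_one_of_choose_cast_eq_zero [CharZero k] {N : ℕ} (hN : 0 < N)
    (h : ∀ i, 0 < i → i < N → ((N.choose i : ℕ) : k) = 0) : N = 1 := by
  by_contra hne
  have h2 : 2 ≤ N := by omega
  have := h 1 one_pos (by omega)
  rw [Nat.choose_one_right] at this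
  exact_mod_cast (Nat.cast_injective.ne (a₁ := N) (a₂ := 0) (by omega)) (by exact_mod_cast this)

end Binomial

variable {B : Type*} [CommRing B]

lemma sum_coeff_at (c : ℕ → B) (M i : ℕ) (hi : i < M) :
    (∑ j ∈ Finset.range (M + 1),
        Polynomial.C (c j) *
          (Polynomial.X ^ (j - i) * ((j.choose i : ℕ) : Polynomial B))).coeff (M - i)
      = ((M.choose i : ℕ) : B) * c M := by
  rw [Polynomial.finset_sum_coeff]
  rw [Finset.sum_eq_single_of_mem M (Finset.self_mem_range_succ M)]
  · rw [← Polynomial.C_eq_natCast, mul_comm (Polynomial.X ^ (M - i)) _, ← mul_assoc,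
      ← Polynomial.C_mul, Polynomial.coeff_C_mul, Polynomial.coeff_X_pow, if_pos rfl,
      mul_one, mul_comm]
  · intro j hj hne
    rw [Finset.mem_range] at hj
    rw [← Polynomial.C_eq_natCast, mul_comm (Polynomial.X ^ (j - i)) _, ← mul_assoc,
      ← Polynomial.C_mul, Polynomial.coeff_C_mul, Polynomial.coeff_X_pow]
    have hcond : ¬ (M - i = j - i) := by omega
    rw [if_neg hcond, mul_zero]

lemma sum_eq_C_top (c : ℕ → B) (M : ℕ) :
    (∑ j ∈ Finset.range (M + 1),
        Polynomial.C (c j) *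
          (Polynomial.X ^ (j - M) * ((j.choose M : ℕ) : Polynomial B)))
      = Polynomial.C (c M) := by
  rw [Finset.sum_eq_single_of_mem M (Finset.self_mem_range_succ M)]
  · simp
  · intro j hj hne
    rw [Finset.mem_range] at hj
    rw [Nat.choose_eq_zero_of_lt (by omega)]
    simp

lemma sum_natDegree_le (c : ℕ → B) (M i : ℕ) :
    (∑ j ∈ Finset.range (M + 1),
        Polynomial.C (c j) *
          (Polynomial.X ^ (j - i) * ((j.choose i : ℕ) : Polynomial B))).natDegree ≤ M - i := by
  apply Polynomial.natDegree_sum_le_of_forall_le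
  intro j hj
  rw [Finset.mem_range] at hj
  calc (Polynomial.C (c j) *
      (Polynomial.X ^ (j - i) * ((j.choose i : ℕ) : Polynomial B))).natDegree
      ≤ (Polynomial.C (c j)).natDegree +
        (Polynomial.X ^ (j - i) * ((j.choose i : ℕ) : Polynomial B)).natDegree :=
        Polynomial.natDegree_mul_le
    _ ≤ 0 + ((Polynomial.X ^ (j - i) : Polynomial B).natDegree +
        (((j.choose i : ℕ) : Polynomial B)).natDegree) := by
        rw [Polynomial.natDegree_C]
        exact add_le_add le_rfl Polynomial.natDegree_mul_le
    _ ≤ M - i := by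
        rw [← Polynomial.C_eq_natCast, Polynomial.natDegree_C, zero_add, add_zero]
        calc (Polynomial.X ^ (j - i) : Polynomial B).natDegree ≤ j - i :=
            Polynomial.natDegree_X_pow_le _
          _ ≤ M - i := by omega


namespace ExpMap

variable {A B : Type*} [CommRing A] [CommRing B] [Algebra A B] (δ : ExpMap A B)

lemma coeff_zero' (b : B) : (δ.toFun b).coeff 0 = b := by
  rw [Polynomial.coeff_zero_eq_eval_zero, δ.eval_zero]

lemma eq_C_of_natDegree_zero {b : B} (h : (δ.toFun b).natDegree = 0) :
    δ.toFun b = Polynomial.C b := by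
  have h2 := Polynomial.eq_C_of_natDegree_eq_zero h
  rw [δ.coeff_zero'] at h2
  exact h2

lemma natDegree_pos_of_ne {b : B} (h : δ.toFun b ≠ Polynomial.C b) :
    0 < (δ.toFun b).natDegree := by
  rcases Nat.eq_zero_or_pos (δ.toFun b).natDegree with h0 | h0
  · exact absurd (δ.eq_C_of_natDegree_zero h0) h
  · exact h0

lemma toFun_ne_zero {b : B} (h : δ.toFun b ≠ Polynomial.C b) : δ.toFun b ≠ 0 := by
  intro h0
  have hb : b = 0 := by rw [← δ.coeff_zero' b, h0, Polynomial.coeff_zero]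
  rw [h0, hb, map_zero] at h
  exact h rfl

lemma leading_ne_zero {b : B} (h : δ.toFun b ≠ Polynomial.C b) :
    (δ.toFun b).coeff (δ.toFun b).natDegree ≠ 0 := by
  rw [Polynomial.coeff_natDegree, Ne, Polynomial.leadingCoeff_eq_zero]
  exact δ.toFun_ne_zero h

/-- The fundamental coefficient relations extracted from co-associativity. -/
lemma star (b : B) (i : ℕ) :
    δ.toFun ((δ.toFun b).coeff i) =
      ∑ j ∈ Finset.range ((δ.toFun b).natDegree + 1),
        Polynomial.C ((δ.toFun b).coeff j) *
          (Polynomial.X ^ (j - i) * ((j.choose i : ℕ) : Polynomial B)) := by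
  have h := congrArg (fun q => q.coeff i) (δ.coassoc b)
  rw [Polynomial.coeff_map] at h
  rw [Polynomial.eval₂_eq_sum_range, Polynomial.finset_sum_coeff] at h
  have key : ∀ j ∈ Finset.range ((δ.toFun b).natDegree + 1),
      ((Polynomial.C.comp Polynomial.C) ((δ.toFun b).coeff j) *
          (Polynomial.C Polynomial.X + Polynomial.X) ^ j).coeff i =
        Polynomial.C ((δ.toFun b).coeff j) *
          (Polynomial.X ^ (j - i) * ((j.choose i : ℕ) : Polynomial B)) := by
    intro j _
    rw [RingHom.comp_apply, Polynomial.coeff_C_mul, add_comm,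
      Polynomial.coeff_X_add_C_pow]
  rw [Finset.sum_congr rfl key] at h
  exact h


lemma delta_aeval {R : Type*} [CommRing R] [Algebra R B]
    (hRinv : ∀ r : R, δ.toFun (algebraMap R B r) = Polynomial.C (algebraMap R B r))
    (x : B) (f : Polynomial R) :
    δ.toFun (Polynomial.aeval x f) = (f.map (algebraMap R B)).comp (δ.toFun x) := by
  induction f using Polynomial.induction_on' with
  | add p q hp hq =>
      rw [map_add, map_add, hp, hq, Polynomial.map_add, Polynomial.add_comp]
  | monomial n a =>
      rw [Polynomial.aeval_monomial, map_mul, map_pow, hRinv, Polynomial.map_monomial,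
        ← Polynomial.C_mul_X_pow_eq_monomial, Polynomial.mul_comp, Polynomial.C_comp,
        Polynomial.pow_comp, Polynomial.X_comp]

end ExpMap


lemma alg_hom_eval₂ {k S T : Type*} [CommSemiring k] [CommSemiring S] [CommSemiring T]
    [Algebra k S] [Algebra k T] (F : S →ₐ[k] T) (f : Polynomial k →ₐ[k] S) (t : S)
    (g : Polynomial (Polynomial k)) :
    F (Polynomial.eval₂ (f : Polynomial k →+* S) t g) =
      Polynomial.eval₂ ((F.comp f : Polynomial k →ₐ[k] T) : Polynomial k →+* T) (F t) g := by
  rw [show (F (Polynomial.eval₂ (↑f) t g)) =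
    (F : S →+* T) (Polynomial.eval₂ (↑f) t g) from rfl, Polynomial.hom_eval₂]
  rfl

section IntMain

variable {k B : Type*} [Field k] [CommRing B] [IsDomain B] [Algebra k B] (δ : ExpMap k B)

/-- The binomial coefficients `(N choose i)` vanish in `k` for `0 < i < N`,
where `N = natDegree (δ x)` and `δ x - x` has coefficients in `k`. -/
lemma nchoose (x : B)
    (hxc : ∀ j, 1 ≤ j → ∃ a : k, (δ.toFun x).coeff j = algebraMap k B a)
    (hxne : δ.toFun x ≠ Polynomial.C x) :
    ∀ i, 0 < i → i < (δ.toFun x).natDegree →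
      ((((δ.toFun x).natDegree).choose i : ℕ) : k) = 0 := by
  intro i hi hiN
  obtain ⟨a, ha⟩ := hxc i hi
  have hstar := δ.star x i
  rw [ha, AlgHom.commutes, Polynomial.algebraMap_apply] at hstar
  have hcoeff := congrArg (fun q => q.coeff ((δ.toFun x).natDegree - i)) hstar
  rw [Polynomial.coeff_C, if_neg (by omega), sum_coeff_at _ _ _ hiN] at hcoeff
  have hcMne : (δ.toFun x).coeff (δ.toFun x).natDegree ≠ 0 := δ.leading_ne_zero hxne
  have hzero : ((((δ.toFun x).natDegree).choose i : ℕ) : B) = 0 := by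
    rcases mul_eq_zero.mp hcoeff.symm with h | h
    · exact h
    · exact absurd h hcMne
  have : algebraMap k B ((((δ.toFun x).natDegree).choose i : ℕ) : k) = algebraMap k B 0 := by
    rw [map_natCast, map_zero, hzero]
  exact (algebraMap k B).injective this

lemma int_main {R : Type*} [CommRing R] [Algebra k R] [Algebra R B] [IsScalarTower k R B]
    (hRinv : ∀ r : R, δ.toFun (algebraMap R B r) = Polynomial.C (algebraMap R B r))
    (x : B)
    (hι : Function.Injective (algebraMap R B))
    (hxc : ∀ j, 1 ≤ j → ∃ a : k, (δ.toFun x).coeff j = algebraMap k B a)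
    (hxne : δ.toFun x ≠ Polynomial.C x)
    (hmin : ∀ c : B, δ.toFun c ≠ Polynomial.C c →
      (δ.toFun x).natDegree ≤ (δ.toFun c).natDegree) :
    ∀ (M : ℕ) (b : B), (δ.toFun b).natDegree ≤ M →
      (∀ j, 1 ≤ j → ∃ f : Polynomial R, Polynomial.aeval x f = (δ.toFun b).coeff j) →
      ∃ g : Polynomial R,
        δ.toFun (b - Polynomial.aeval x g) = Polynomial.C (b - Polynomial.aeval x g) := by
  set N := (δ.toFun x).natDegree with hNdef
  have hN0 : 0 < N := δ.natDegree_pos_of_ne hxne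
  have hNchoose := nchoose δ x hxc hxne
  -- the subalgebra of `R`-polynomial expressions in `x`
  set Rng : Subalgebra R B := (Polynomial.aeval x : Polynomial R →ₐ[R] B).range with hRng
  have hxmem : x ∈ Rng := ⟨Polynomial.X, Polynomial.aeval_X x⟩
  have hkmem : ∀ a : k, algebraMap k B a ∈ Rng := by
    intro a
    rw [IsScalarTower.algebraMap_apply k R B a]
    exact Rng.algebraMap_mem _
  -- coefficients of powers of δ x are in Rng
  have POW : ∀ (m : ℕ) (j : ℕ), ((δ.toFun x) ^ m).coeff j ∈ Rng := by
    intro m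
    induction m with
    | zero =>
        intro j
        rw [pow_zero, Polynomial.coeff_one]
        split_ifs
        · exact Rng.one_mem
        · exact Rng.zero_mem
    | succ m IHm =>
        intro j
        rw [pow_succ, Polynomial.coeff_mul]
        apply Subalgebra.sum_mem
        intro c _
        apply mul_mem (IHm c.1)
        rcases Nat.eq_zero_or_pos c.2 with h0 | h1
        · rw [h0, δ.coeff_zero']
          exact hxmem
        · obtain ⟨a, ha⟩ := hxc c.2 h1
          rw [ha]
          exact hkmem a
  -- the key divisibility
  have hNdvd : ∀ b : B, δ.toFun b ≠ Polynomial.C b →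
      (∀ j, 1 ≤ j → ∃ f : Polynomial R, Polynomial.aeval x f = (δ.toFun b).coeff j) →
      N ∣ (δ.toFun b).natDegree := by
    intro b hbne hb
    set M₀ := (δ.toFun b).natDegree with hM₀def
    have hM₀pos : 0 < M₀ := δ.natDegree_pos_of_ne hbne
    have hNM : N ≤ M₀ := hmin b hbne
    rcases CharP.char_is_prime_or_zero k (ringChar k) with hp | h0
    · -- positive characteristic
      set p := ringChar k with hpdef
      have hNpow : N = p ^ (N.factorization p) := eq_pow_of_choose_cast_eq_zero hp hN0 hNchoose
      set v := M₀.factorization p with hvdef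
      set q := p ^ v with hqdef
      have hqdvd : q ∣ M₀ := Nat.ordProj_dvd M₀ p
      by_cases hq : q = M₀
      · have hle : p ^ (N.factorization p) ≤ p ^ v := by
          rw [← hNpow, ← hqdef, hq]; exact hNM
        have hev : N.factorization p ≤ v := (Nat.pow_le_pow_iff_right hp.one_lt).mp hle
        rw [hNpow, ← hq, hqdef]
        exact pow_dvd_pow p hev
      · have hqlt : q < M₀ := lt_of_le_of_ne (Nat.le_of_dvd hM₀pos hqdvd) hq
        have hq0 : 0 < q := pow_pos hp.pos v
        set i₀ := M₀ - q with hi₀def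
        obtain ⟨f, hf⟩ := hb i₀ (by omega)
        have hEQ : (f.map (algebraMap R B)).comp (δ.toFun x) =
            ∑ j ∈ Finset.range (M₀ + 1),
              Polynomial.C ((δ.toFun b).coeff j) *
                (Polynomial.X ^ (j - i₀) * ((j.choose i₀ : ℕ) : Polynomial B)) := by
          rw [← δ.delta_aeval hRinv x f, hf, δ.star b i₀]
        have hdegL : ((f.map (algebraMap R B)).comp (δ.toFun x)).natDegree =
            f.natDegree * N := by
          rw [Polynomial.natDegree_comp, Polynomial.natDegree_map_eq_of_injective hι]
        have hMi : M₀ - i₀ = q := by omega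
        have hcq : ((f.map (algebraMap R B)).comp (δ.toFun x)).coeff q =
            ((M₀.choose i₀ : ℕ) : B) * (δ.toFun b).coeff M₀ := by
          rw [hEQ, ← hMi]
          exact sum_coeff_at _ M₀ i₀ (by omega)
        have hchooseq : M₀.choose i₀ = M₀.choose q := by
          rw [hi₀def]
          exact Nat.choose_symm (le_of_lt hqlt)
        have hchoosene : ((M₀.choose i₀ : ℕ) : B) ≠ 0 := by
          rw [hchooseq]
          have h1 : ((M₀.choose q : ℕ) : k) = ((M₀ / q : ℕ) : k) :=
            choose_ordProj_cast hp hM₀pos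
          have h2 : ((M₀ / q : ℕ) : k) ≠ 0 := by
            rw [Ne, CharP.cast_eq_zero_iff k p]
            exact Nat.not_dvd_ordCompl hp hM₀pos.ne'
          intro h3
          apply h2
          rw [← h1]
          apply (algebraMap k B).injective
          rw [map_natCast, map_zero]
          exact h3
        have hcMne : (δ.toFun b).coeff M₀ ≠ 0 := δ.leading_ne_zero hbne
        have hdegR : ((f.map (algebraMap R B)).comp (δ.toFun x)).natDegree = q := by
          apply le_antisymm
          · rw [hEQ]
            exact le_trans (sum_natDegree_le _ M₀ i₀) (by omega)
          · apply Polynomial.le_natDegree_of_ne_zero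
            rw [hcq]
            exact mul_ne_zero hchoosene hcMne
        have hfq : f.natDegree * N = q := by rw [← hdegL, hdegR]
        exact dvd_trans ⟨f.natDegree, by rw [← hfq, mul_comm]⟩ hqdvd
    · -- characteristic zero
      haveI : CharP k 0 := h0 ▸ ringChar.charP k
      haveI : CharZero k := CharP.charP_to_charZero k
      have hN1 : N = 1 := eq_one_of_choose_cast_eq_zero hN0 hNchoose
      rw [hN1]
      exact one_dvd _
  -- main induction
  intro M
  induction M with
  | zero =>
      intro b hdeg _
      refine ⟨0, ?_⟩
      rw [map_zero, sub_zero]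
      exact δ.eq_C_of_natDegree_zero (Nat.le_zero.mp hdeg)
  | succ M IH =>
      intro b hdeg hb
      by_cases hbne : δ.toFun b = Polynomial.C b
      · exact ⟨0, by rwa [map_zero, sub_zero]⟩
      · set M₀ := (δ.toFun b).natDegree with hM₀def
        have hM₀pos : 0 < M₀ := δ.natDegree_pos_of_ne hbne
        have hdvd : N ∣ M₀ := hNdvd b hbne hb
        obtain ⟨fM, hfM⟩ := hb M₀ hM₀pos
        have hEQM : (fM.map (algebraMap R B)).comp (δ.toFun x) =
            Polynomial.C ((δ.toFun b).coeff M₀) := by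
          rw [← δ.delta_aeval hRinv x fM, hfM, δ.star b M₀, sum_eq_C_top]
        have hfMdeg : fM.natDegree = 0 := by
          have h1 := congrArg Polynomial.natDegree hEQM
          rw [Polynomial.natDegree_comp, Polynomial.natDegree_map_eq_of_injective hι,
            Polynomial.natDegree_C] at h1
          rcases Nat.mul_eq_zero.mp h1 with h | h
          · exact h
          · omega
        set ρ : R := fM.coeff 0 with hρdef
        have hρ : algebraMap R B ρ = (δ.toFun b).coeff M₀ := by
          rw [← hfM]
          conv_rhs => rw [Polynomial.eq_C_of_natDegree_eq_zero hfMdeg]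
          rw [Polynomial.aeval_C]
        obtain ⟨κ, hκ⟩ := hxc N hN0
        have hκne : κ ≠ 0 := by
          intro h0
          apply δ.leading_ne_zero hxne
          rw [← hNdef, hκ, h0, map_zero]
        set M' := M₀ / N with hM'def
        have hM'N : N * M' = M₀ := Nat.mul_div_cancel' hdvd
        set ρ' : R := ρ * algebraMap k R (κ⁻¹ ^ M') with hρ'def
        set g₀ : Polynomial R := Polynomial.C ρ' * Polynomial.X ^ M' with hg₀def
        have hδb' : δ.toFun (b - Polynomial.aeval x g₀) =
            δ.toFun b - Polynomial.C (algebraMap R B ρ') * (δ.toFun x) ^ M' := by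
          rw [map_sub, δ.delta_aeval hRinv, hg₀def, Polynomial.map_mul, Polynomial.map_C,
            Polynomial.map_pow, Polynomial.map_X, Polynomial.mul_comp, Polynomial.C_comp,
            Polynomial.pow_comp, Polynomial.X_comp]
        have hlead : (δ.toFun x).leadingCoeff = algebraMap k B κ := by
          rw [← Polynomial.coeff_natDegree]
          exact hκ
        have hcoeffpow : ((δ.toFun x) ^ M').coeff M₀ = algebraMap k B (κ ^ M') := by
          have hdegpow : ((δ.toFun x) ^ M').natDegree = M' * N :=
            Polynomial.natDegree_pow _ _
          rw [show M₀ = M' * N by rw [← hM'N]; ring, ← hdegpow, Polynomial.coeff_natDegree,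
            Polynomial.leadingCoeff_pow, hlead, map_pow]
        have hcoeffM₀ : (δ.toFun (b - Polynomial.aeval x g₀)).coeff M₀ = 0 := by
          rw [hδb', Polynomial.coeff_sub, Polynomial.coeff_C_mul, hcoeffpow]
          have hcancel : algebraMap R B ρ' * algebraMap k B (κ ^ M') =
              (δ.toFun b).coeff M₀ := by
            rw [hρ'def, map_mul, ← IsScalarTower.algebraMap_apply k R B, mul_assoc, ← map_mul,
              inv_pow, inv_mul_cancel₀ (pow_ne_zero M' hκne), map_one, mul_one, hρ]
          rw [hcancel, sub_self]
        have hdegb' : (δ.toFun (b - Polynomial.aeval x g₀)).natDegree ≤ M := by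
          have hle : (δ.toFun (b - Polynomial.aeval x g₀)).natDegree ≤ M₀ := by
            rw [hδb']
            refine le_trans (Polynomial.natDegree_sub_le _ _) ?_
            apply max_le le_rfl
            calc (Polynomial.C (algebraMap R B ρ') * (δ.toFun x) ^ M').natDegree
                ≤ (Polynomial.C (algebraMap R B ρ')).natDegree +
                  ((δ.toFun x) ^ M').natDegree := Polynomial.natDegree_mul_le
              _ ≤ M₀ := by
                  rw [Polynomial.natDegree_C, Polynomial.natDegree_pow, zero_add, Nat.mul_comm, ← hNdef]
                  omega
          have hne' : (δ.toFun (b - Polynomial.aeval x g₀)).natDegree ≠ M₀ := by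
            intro he
            have h0 : δ.toFun (b - Polynomial.aeval x g₀) = 0 := by
              rw [← Polynomial.leadingCoeff_eq_zero, ← Polynomial.coeff_natDegree, he,
                hcoeffM₀]
            rw [h0, Polynomial.natDegree_zero] at he
            omega
          have : (δ.toFun (b - Polynomial.aeval x g₀)).natDegree < M₀ :=
            lt_of_le_of_ne hle hne'
          omega
        have hb'coeff : ∀ j, 1 ≤ j → ∃ f : Polynomial R,
            Polynomial.aeval x f = (δ.toFun (b - Polynomial.aeval x g₀)).coeff j := by
          intro j hj
          have hmem : (δ.toFun (b - Polynomial.aeval x g₀)).coeff j ∈ Rng := by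
            rw [hδb', Polynomial.coeff_sub, Polynomial.coeff_C_mul]
            apply sub_mem
            · obtain ⟨fj, hfj⟩ := hb j hj
              exact ⟨fj, hfj⟩
            · exact mul_mem (Rng.algebraMap_mem ρ') (POW M' j)
          obtain ⟨f, hf⟩ := hmem
          exact ⟨f, hf⟩
        obtain ⟨g', hg'⟩ := IH (b - Polynomial.aeval x g₀) hdegb' hb'coeff
        refine ⟨g₀ + g', ?_⟩
        have hrw : b - Polynomial.aeval x (g₀ + g') =
            (b - Polynomial.aeval x g₀) - Polynomial.aeval x g' := by
          rw [map_add]; ring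
        rw [hrw]
        exact hg'

end IntMain


end Aux

/-- Let `B = k^[3]` and `δ ∈ EXP(B)` be triangular with respect to a
coordinate system `{X, Y, Z}`. If `rank δ = 2` then `δ(X) = X`; in particular every
triangular exponential map of `k^[3]` has rank at most `2`. -/
theorem triangular_rank_two_fixes_first_variable
    {k B : Type*} [Field k] [CommRing B] [IsDomain B] [Algebra k B]
    (δ : ExpMap k B) (X : Fin 3 → B) (htri : δ.IsTriangularWith X) :
    (δ.rank 3 = 2 → δ.toFun (X 0) = Polynomial.C (X 0)) ∧ δ.rank 3 ≤ 2 := by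
  obtain ⟨hcoord, hcoef, hslice⟩ := htri
  by_cases hx : δ.toFun (X 0) = Polynomial.C (X 0)
  · refine ⟨fun _ => hx, ?_⟩
    apply Nat.sInf_le
    refine ⟨X, hcoord, ?_⟩
    rw [Algebra.adjoin_le_iff]
    rintro u ⟨i, hi, rfl⟩
    simp only [Set.mem_setOf_eq] at hi
    have h0 : i = 0 := Fin.ext (by omega)
    rw [h0]
    exact hx
  · -- Case 2 : `δ (X 0) ≠ X 0`.  We show `rank ≤ 1`.
    have hloc : δ.IsLocalSlice (X 0) := hslice 0 hx (fun l hl => absurd hl (Nat.not_lt_zero _))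
    have hxc : ∀ j, 1 ≤ j → ∃ a : k, (δ.toFun (X 0)).coeff j = algebraMap k B a := by
      intro j hj
      have hmem := hcoef 0 j hj
      have hset : X '' {l : Fin 3 | (l : ℕ) < ((0 : Fin 3) : ℕ)} = ∅ := by
        have : {l : Fin 3 | (l : ℕ) < ((0 : Fin 3) : ℕ)} = ∅ := by
          ext l; simp
        rw [this, Set.image_empty]
      rw [hset, Algebra.adjoin_empty, Algebra.mem_bot] at hmem
      obtain ⟨a, ha⟩ := hmem
      exact ⟨a, ha.symm⟩
    have hmin : ∀ c : B, δ.toFun c ≠ Polynomial.C c →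
        (δ.toFun (X 0)).natDegree ≤ (δ.toFun c).natDegree :=
      fun c hc => hloc.2 c (δ.natDegree_pos_of_ne hc)
    have hRinv1 : ∀ r : k, δ.toFun (algebraMap k B r) = Polynomial.C (algebraMap k B r) := by
      intro r; rw [AlgHom.commutes, Polynomial.algebraMap_apply]
    -- Step 1 : make the second variable invariant.
    have hycoef : ∀ j, 1 ≤ j → ∃ f : Polynomial k,
        Polynomial.aeval (X 0) f = (δ.toFun (X 1)).coeff j := by
      intro j hj
      have hmem := hcoef 1 j hj
      have hset : X '' {l : Fin 3 | (l : ℕ) < ((1 : Fin 3) : ℕ)} = {X 0} := by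
        ext u
        constructor
        · rintro ⟨l, hl, rfl⟩
          simp only [Set.mem_setOf_eq] at hl
          have h0 : l = 0 := Fin.ext (by omega)
          rw [h0]
          exact Set.mem_singleton _
        · intro hu
          rw [Set.mem_singleton_iff] at hu
          exact ⟨0, by norm_num, hu.symm⟩
      rw [hset, Algebra.adjoin_singleton_eq_range_aeval, AlgHom.mem_range] at hmem
      exact hmem
    obtain ⟨g₁, hg₁⟩ := int_main δ (R := k) hRinv1 (X 0) ((algebraMap k B).injective) hxc hx hmin
      ((δ.toFun (X 1)).natDegree) (X 1) le_rfl hycoef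
    -- `v` is the new invariant second coordinate
    set v : B := X 1 - Polynomial.aeval (X 0) g₁ with hvdef
    -- Step 2 : make the third variable invariant, working over `k[v]`.
    letI : Algebra (Polynomial k) B := ((Polynomial.aeval v : Polynomial k →ₐ[k] B) :
      Polynomial k →+* B).toAlgebra
    haveI : IsScalarTower k (Polynomial k) B :=
      IsScalarTower.of_algebraMap_eq (fun c => ((Polynomial.aeval v).commutes c).symm)
    have hRinv2 : ∀ r : Polynomial k,
        δ.toFun (algebraMap (Polynomial k) B r) = Polynomial.C (algebraMap (Polynomial k) B r) := by
      intro r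
      show δ.toFun (Polynomial.aeval v r) = Polynomial.C (Polynomial.aeval v r)
      rw [δ.delta_aeval hRinv1 v r, hg₁, Polynomial.comp_C, Polynomial.eval_map,
        ← Polynomial.aeval_def]
    -- the ambient polynomial ring
    set Φ : MvPolynomial (Fin 3) k →ₐ[k] B := MvPolynomial.aeval X with hΦdef
    have hΦbij : Function.Bijective Φ := hcoord
    have hΦX : ∀ i, Φ (MvPolynomial.X i) = X i := fun i => MvPolynomial.aeval_X X i
    set P₁ : MvPolynomial (Fin 3) k := Polynomial.aeval (MvPolynomial.X 0) g₁ with hP₁def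
    set w₁ : MvPolynomial (Fin 3) k := MvPolynomial.X 1 - P₁ with hw₁def
    have hΦP₁ : Φ P₁ = Polynomial.aeval (X 0) g₁ := by
      rw [hP₁def, ← Polynomial.aeval_algHom_apply, hΦX]
    have hΦw₁ : Φ w₁ = v := by
      rw [hw₁def, map_sub, hΦX, hΦP₁]
    have haevalw₁_inj : Function.Injective
        (Polynomial.aeval w₁ : Polynomial k →ₐ[k] MvPolynomial (Fin 3) k) := by
      set L : MvPolynomial (Fin 3) k →ₐ[k] Polynomial k :=
        MvPolynomial.aeval
          ![0, Polynomial.X + Polynomial.C (Polynomial.aeval (0 : k) g₁), 0] with hLdef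
      have hLw₁ : L w₁ = Polynomial.X := by
        rw [hw₁def, map_sub, hP₁def, ← Polynomial.aeval_algHom_apply]
        rw [hLdef]
        rw [MvPolynomial.aeval_X, MvPolynomial.aeval_X]
        show Polynomial.X + Polynomial.C (Polynomial.aeval (0:k) g₁) -
          Polynomial.aeval (0 : Polynomial k) g₁ = Polynomial.X
        rw [show (0 : Polynomial k) = algebraMap k (Polynomial k) 0 from (map_zero _).symm,
          Polynomial.aeval_algebraMap_apply, Polynomial.algebraMap_eq]
        ring
      have hL : ∀ f : Polynomial k, L (Polynomial.aeval w₁ f) = f := by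
        intro f
        rw [← Polynomial.aeval_algHom_apply, hLw₁, Polynomial.aeval_X_left_apply]
      intro f₁ f₂ h12
      have h := congrArg L h12
      rw [hL, hL] at h
      exact h
    have hι₂ : Function.Injective (algebraMap (Polynomial k) B) := by
      have hfact : ∀ f : Polynomial k, algebraMap (Polynomial k) B f =
          Φ (Polynomial.aeval w₁ f) := by
        intro f
        show Polynomial.aeval v f = _
        rw [← hΦw₁, Polynomial.aeval_algHom_apply]
      intro f₁ f₂ h12
      rw [hfact, hfact] at h12
      exact haevalw₁_inj (hΦbij.injective h12)
    have hzcoef : ∀ j, 1 ≤ j → ∃ f : Polynomial (Polynomial k),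
        Polynomial.aeval (X 0) f = (δ.toFun (X 2)).coeff j := by
      intro j hj
      have hmem := hcoef 2 j hj
      have hset : X '' {l : Fin 3 | (l : ℕ) < ((2 : Fin 3) : ℕ)} = {X 0, X 1} := by
        ext u
        constructor
        · rintro ⟨l, hl, rfl⟩
          simp only [Set.mem_setOf_eq] at hl
          rcases (by omega : (l : ℕ) = 0 ∨ (l : ℕ) = 1) with h | h
          · left; rw [Fin.ext (a := l) (b := 0) h]
          · right; rw [Fin.ext (a := l) (b := 1) h]
            exact Set.mem_singleton _
        · rintro (hu | hu)
          · exact ⟨0, by norm_num, hu.symm⟩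
          · rw [Set.mem_singleton_iff] at hu
            exact ⟨1, by norm_num, hu.symm⟩
      rw [hset] at hmem
      have hle : Algebra.adjoin k ({X 0, X 1} : Set B) ≤
          Subalgebra.restrictScalars k
            (Polynomial.aeval (X 0) : Polynomial (Polynomial k) →ₐ[Polynomial k] B).range := by
        rw [Algebra.adjoin_le_iff]
        rintro u (hu | hu)
        · rw [hu, SetLike.mem_coe, Subalgebra.mem_restrictScalars, AlgHom.mem_range]
          exact ⟨Polynomial.X, Polynomial.aeval_X _⟩
        · rw [Set.mem_singleton_iff] at hu
          rw [hu, SetLike.mem_coe, Subalgebra.mem_restrictScalars]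
          have h1 : v ∈ (Polynomial.aeval (X 0) :
              Polynomial (Polynomial k) →ₐ[Polynomial k] B).range := by
            rw [AlgHom.mem_range]
            refine ⟨Polynomial.C Polynomial.X, ?_⟩
            rw [Polynomial.aeval_C]
            show Polynomial.aeval v Polynomial.X = v
            rw [Polynomial.aeval_X]
          have h2 : Polynomial.aeval (X 0) g₁ ∈ (Polynomial.aeval (X 0) :
              Polynomial (Polynomial k) →ₐ[Polynomial k] B).range := by
            rw [AlgHom.mem_range]
            exact ⟨g₁.map (algebraMap k (Polynomial k)),
              Polynomial.aeval_map_algebraMap _ _ _⟩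
          have h3 : X 1 = v + Polynomial.aeval (X 0) g₁ := by rw [hvdef]; ring
          rw [h3]
          exact add_mem h1 h2
      have hmem2 := hle hmem
      rw [Subalgebra.mem_restrictScalars, AlgHom.mem_range] at hmem2
      exact hmem2
    obtain ⟨g₂, hg₂⟩ := int_main δ (R := Polynomial k) hRinv2 (X 0) hι₂ hxc hx hmin
      ((δ.toFun (X 2)).natDegree) (X 2) le_rfl hzcoef
    set w : B := X 2 - Polynomial.aeval (X 0) g₂ with hwdef
    -- Step 3 : the new coordinate system `(v, w, x)`.
    set P₂ : MvPolynomial (Fin 3) k :=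
      Polynomial.eval₂ ((Polynomial.aeval w₁ : Polynomial k →ₐ[k] MvPolynomial (Fin 3) k) :
        Polynomial k →+* MvPolynomial (Fin 3) k) (MvPolynomial.X 0) g₂ with hP₂def
    set w₂ : MvPolynomial (Fin 3) k := MvPolynomial.X 2 - P₂ with hw₂def
    have hΦP₂ : Φ P₂ = Polynomial.aeval (X 0) g₂ := by
      rw [hP₂def, alg_hom_eval₂ Φ (Polynomial.aeval w₁) (MvPolynomial.X 0) g₂]
      have hring : Φ.comp (Polynomial.aeval w₁ : Polynomial k →ₐ[k] MvPolynomial (Fin 3) k) =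
          (Polynomial.aeval v : Polynomial k →ₐ[k] B) := by
        rw [← hΦw₁]
        exact (Polynomial.aeval_algHom Φ w₁).symm
      rw [hring, hΦX, Polynomial.aeval_def]
      rfl
    have hΦw₂ : Φ w₂ = w := by
      rw [hw₂def, map_sub, hΦX, hΦP₂]
    set Q₁ : MvPolynomial (Fin 3) k := Polynomial.aeval (MvPolynomial.X 2) g₁ with hQ₁def
    set Q₂ : MvPolynomial (Fin 3) k :=
      Polynomial.eval₂ ((Polynomial.aeval (MvPolynomial.X 0 : MvPolynomial (Fin 3) k) :
        Polynomial k →ₐ[k] MvPolynomial (Fin 3) k) :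
        Polynomial k →+* MvPolynomial (Fin 3) k) (MvPolynomial.X 2) g₂ with hQ₂def
    set T : MvPolynomial (Fin 3) k →ₐ[k] MvPolynomial (Fin 3) k :=
      MvPolynomial.aeval ![w₁, w₂, MvPolynomial.X 0] with hTdef
    set U : MvPolynomial (Fin 3) k →ₐ[k] MvPolynomial (Fin 3) k :=
      MvPolynomial.aeval ![MvPolynomial.X 2, MvPolynomial.X 0 + Q₁, MvPolynomial.X 1 + Q₂]
      with hUdef
    have hpush : ∀ (F : MvPolynomial (Fin 3) k →ₐ[k] MvPolynomial (Fin 3) k)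
        (s : MvPolynomial (Fin 3) k) (g : Polynomial k),
        F (Polynomial.aeval s g) = Polynomial.aeval (F s) g :=
      fun F s g => (Polynomial.aeval_algHom_apply F s g).symm
    have hpush₂ : ∀ (F : MvPolynomial (Fin 3) k →ₐ[k] MvPolynomial (Fin 3) k)
        (s t : MvPolynomial (Fin 3) k) (g : Polynomial (Polynomial k)),
        F (Polynomial.eval₂ ((Polynomial.aeval s : Polynomial k →ₐ[k] MvPolynomial (Fin 3) k) :
            Polynomial k →+* MvPolynomial (Fin 3) k) t g) =
          Polynomial.eval₂
            ((Polynomial.aeval (F s) : Polynomial k →ₐ[k] MvPolynomial (Fin 3) k) :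
              Polynomial k →+* MvPolynomial (Fin 3) k) (F t) g := by
      intro F s t g
      rw [alg_hom_eval₂ F (Polynomial.aeval s) t g,
        ← Polynomial.aeval_algHom F s]
    -- generator images of T
    have hT0 : T (MvPolynomial.X 0) = w₁ := by rw [hTdef, MvPolynomial.aeval_X]; rfl
    have hT1 : T (MvPolynomial.X 1) = w₂ := by rw [hTdef, MvPolynomial.aeval_X]; rfl
    have hT2 : T (MvPolynomial.X 2) = MvPolynomial.X 0 := by
      rw [hTdef, MvPolynomial.aeval_X]; rfl
    have hU0 : U (MvPolynomial.X 0) = MvPolynomial.X 2 := by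
      rw [hUdef, MvPolynomial.aeval_X]; rfl
    have hU1 : U (MvPolynomial.X 1) = MvPolynomial.X 0 + Q₁ := by
      rw [hUdef, MvPolynomial.aeval_X]; rfl
    have hU2 : U (MvPolynomial.X 2) = MvPolynomial.X 1 + Q₂ := by
      rw [hUdef, MvPolynomial.aeval_X]; rfl
    have hUw₁ : U w₁ = MvPolynomial.X 0 := by
      rw [hw₁def, map_sub, hU1, hP₁def, hpush U, hU0, ← hQ₁def]
      ring
    have hUw₂ : U w₂ = MvPolynomial.X 1 := by
      rw [hw₂def, map_sub, hU2, hP₂def, hpush₂ U, hUw₁, hU0, ← hQ₂def]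
      ring
    have hTw : T (MvPolynomial.X 0 + Q₁) = MvPolynomial.X 1 := by
      rw [map_add, hT0, hQ₁def, hpush T, hT2, ← hP₁def, hw₁def]
      ring
    have hTw₂ : T (MvPolynomial.X 1 + Q₂) = MvPolynomial.X 2 := by
      rw [map_add, hT1, hQ₂def, hpush₂ T, hT0, hT2, ← hP₂def, hw₂def]
      ring
    have hUT : U.comp T = AlgHom.id k (MvPolynomial (Fin 3) k) := by
      apply MvPolynomial.algHom_ext
      intro i
      fin_cases i
      · show (U.comp T) (MvPolynomial.X 0) = AlgHom.id k (MvPolynomial (Fin 3) k) (MvPolynomial.X 0)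
        rw [AlgHom.comp_apply, hT0, hUw₁, AlgHom.id_apply]
      · show (U.comp T) (MvPolynomial.X 1) = AlgHom.id k (MvPolynomial (Fin 3) k) (MvPolynomial.X 1)
        rw [AlgHom.comp_apply, hT1, hUw₂, AlgHom.id_apply]
      · show (U.comp T) (MvPolynomial.X 2) = AlgHom.id k (MvPolynomial (Fin 3) k) (MvPolynomial.X 2)
        rw [AlgHom.comp_apply, hT2, hU0, AlgHom.id_apply]
    have hTU : T.comp U = AlgHom.id k (MvPolynomial (Fin 3) k) := by
      apply MvPolynomial.algHom_ext
      intro i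
      fin_cases i
      · show (T.comp U) (MvPolynomial.X 0) = AlgHom.id k (MvPolynomial (Fin 3) k) (MvPolynomial.X 0)
        rw [AlgHom.comp_apply, hU0, hT2, AlgHom.id_apply]
      · show (T.comp U) (MvPolynomial.X 1) = AlgHom.id k (MvPolynomial (Fin 3) k) (MvPolynomial.X 1)
        rw [AlgHom.comp_apply, hU1, hTw, AlgHom.id_apply]
      · show (T.comp U) (MvPolynomial.X 2) = AlgHom.id k (MvPolynomial (Fin 3) k) (MvPolynomial.X 2)
        rw [AlgHom.comp_apply, hU2, hTw₂, AlgHom.id_apply]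
    have hTbij : Function.Bijective T := by
      rw [Function.bijective_iff_has_inverse]
      refine ⟨U, fun e => ?_, fun e => ?_⟩
      · have := DFunLike.congr_fun hUT e
        simpa using this
      · have := DFunLike.congr_fun hTU e
        simpa using this
    have hYcoord : IsCoordSystem k ![v, w, X 0] := by
      have heq : (MvPolynomial.aeval ![v, w, X 0] :
          MvPolynomial (Fin 3) k →ₐ[k] B) = Φ.comp T := by
        apply MvPolynomial.algHom_ext
        intro i
        fin_cases i
        · show (MvPolynomial.aeval ![v, w, X 0]) (MvPolynomial.X 0) =
            (Φ.comp T) (MvPolynomial.X 0)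
          rw [MvPolynomial.aeval_X, AlgHom.comp_apply, hT0, hΦw₁]; rfl
        · show (MvPolynomial.aeval ![v, w, X 0]) (MvPolynomial.X 1) =
            (Φ.comp T) (MvPolynomial.X 1)
          rw [MvPolynomial.aeval_X, AlgHom.comp_apply, hT1, hΦw₂]; rfl
        · show (MvPolynomial.aeval ![v, w, X 0]) (MvPolynomial.X 2) =
            (Φ.comp T) (MvPolynomial.X 2)
          rw [MvPolynomial.aeval_X, AlgHom.comp_apply, hT2, hΦX]; rfl
      show Function.Bijective (MvPolynomial.aeval ![v, w, X 0])
      rw [heq, AlgHom.coe_comp]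
      exact hΦbij.comp hTbij
    have hrank : δ.rank 3 ≤ 1 := by
      apply Nat.sInf_le
      refine ⟨![v, w, X 0], hYcoord, ?_⟩
      rw [Algebra.adjoin_le_iff]
      rintro u ⟨i, hi, rfl⟩
      simp only [Set.mem_setOf_eq] at hi
      rcases (by omega : (i : ℕ) = 0 ∨ (i : ℕ) = 1) with h | h
      · rw [Fin.ext (a := i) (b := 0) h]
        exact hg₁
      · rw [Fin.ext (a := i) (b := 1) h]
        exact hg₂
    exact ⟨fun h2 => absurd h2 (by omega), by omega⟩
end
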